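/- arXiv:2101.11083 — 6 statements merged into one kernel-verified Lean document; each statement's English description precedes it below -/
import Mathlib

section
/- Let G ∈ 𝒫_T be a conditionally uniform probability measure on a finite dyadic partition tree T of (0,1]^d with tree-CDF 𝐆. Then for every Borel set B ⊆ (0,1]^d, G(B) = μ(𝐆(B)), where μ is Lebesgue measure and 𝐆(B) = {𝐆(x) : x ∈ B}. -/
open MeasureTheory Set

/-- An axis-aligned half-open box `∏ⱼ (lo j, hi j]` in `ℝ^d`. -/
structure Box (d : ℕ) where
  lo : Fin d → ℝ
  hi : Fin d → ℝ

/-- The subset of `ℝ^d` represented by a box. -/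
def Box.set {d : ℕ} (B : Box d) : Set (Fin d → ℝ) :=
  Set.univ.pi fun j => Ioc (B.lo j) (B.hi j)

/-- The left child obtained by splitting coordinate `j` at `s`. -/
def Box.left {d : ℕ} (B : Box d) (j : Fin d) (s : ℝ) : Box d :=
  ⟨B.lo, Function.update B.hi j s⟩

/-- The right child obtained by splitting coordinate `j` at `s`. -/
def Box.right {d : ℕ} (B : Box d) (j : Fin d) (s : ℝ) : Box d :=
  ⟨Function.update B.lo j s, B.hi⟩

/-- A finite recursive dyadic partition tree: each interior node splits its box at
coordinate `j`, position `s`, and carries the conditional probability `θ = G(A_l | A)`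
of its left child. -/
inductive DTree (d : ℕ) where
  | leaf : DTree d
  | node (j : Fin d) (s θ : ℝ) (l r : DTree d) : DTree d

/-- Validity of a tree with respect to a box: every split point is interior to the
current box and every conditional probability lies in `(0,1)`. -/
def DTree.valid {d : ℕ} : DTree d → Box d → Prop
  | .leaf, B => ∀ i, B.lo i < B.hi i
  | .node j s θ l r, B =>
      (∀ i, B.lo i < B.hi i) ∧ B.lo j < s ∧ s < B.hi j ∧ 0 < θ ∧ θ < 1 ∧
        l.valid (B.left j s) ∧ r.valid (B.right j s)

/-- The local move `𝐆_A` of a node: it fixes all coordinates except the split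
coordinate `j`, where it applies the piecewise affine map determined by the conditional
probability `θ` of the left child. -/
noncomputable def localMove {d : ℕ} (B : Box d) (j : Fin d) (s θ : ℝ)
    (x : Fin d → ℝ) : Fin d → ℝ :=
  Function.update x j
    (if x j ≤ s then
        B.lo j + (x j - B.lo j) * (θ * (B.hi j - B.lo j) / (s - B.lo j))
      else
        B.hi j - (B.hi j - x j) * ((1 - θ) * (B.hi j - B.lo j) / (B.hi j - s)))

/-- The tree-CDF `𝐆 = 𝐆_{A₁} ∘ ⋯ ∘ 𝐆_{A_{R−1}}`: along the branch containing `x`, the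
local moves are applied from the finest ancestor up to the root. -/
noncomputable def treeCDF {d : ℕ} : DTree d → Box d → (Fin d → ℝ) → (Fin d → ℝ)
  | .leaf, _, x => x
  | .node j s θ l r, B, x =>
      localMove B j s θ
        (if x j ≤ s then treeCDF l (B.left j s) x else treeCDF r (B.right j s) x)

/-- The conditionally uniform measure `G ∈ 𝒫_T` determined by the tree: uniform on each
leaf box, with conditional probability `θ` on the left child of each interior node. -/
noncomputable def treeMeasure {d : ℕ} : DTree d → Box d → Measure (Fin d → ℝ)
  | .leaf, B => (volume B.set)⁻¹ • volume.restrict B.set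
  | .node j s θ l r, B =>
      ENNReal.ofReal θ • treeMeasure l (B.left j s) +
        ENNReal.ofReal (1 - θ) • treeMeasure r (B.right j s)

/-- The unit box `(0,1]^d`. -/
def unitBox (d : ℕ) : Box d := ⟨fun _ => 0, fun _ => 1⟩


variable {d : ℕ}

/-- Linear map scaling coordinate `j` by `c`. -/
noncomputable def scaleCoord (j : Fin d) (c : ℝ) : (Fin d → ℝ) →ₗ[ℝ] (Fin d → ℝ) where
  toFun x := Function.update x j (c * x j)
  map_add' x y := by
    funext i
    by_cases h : i = j
    · subst h; simp [Function.update_self]; ring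
    · simp [Function.update_of_ne h]
  map_smul' a x := by
    funext i
    by_cases h : i = j
    · subst h; simp [Function.update_self]; ring
    · simp [Function.update_of_ne h]

lemma scaleCoord_det (j : Fin d) (c : ℝ) : LinearMap.det (scaleCoord j c) = c := by
  rw [← LinearMap.det_toMatrix (Pi.basisFun ℝ (Fin d))]
  have : LinearMap.toMatrix (Pi.basisFun ℝ (Fin d)) (Pi.basisFun ℝ (Fin d)) (scaleCoord j c)
      = Matrix.diagonal (fun i => if i = j then c else 1) := by
    ext i k
    rw [LinearMap.toMatrix_apply]
    simp only [Pi.basisFun_apply, Pi.basisFun_repr, scaleCoord, LinearMap.coe_mk,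
      AddHom.coe_mk, Matrix.diagonal_apply]
    by_cases h1 : i = j <;> by_cases h2 : i = k
    · subst h1; subst h2; simp [Function.update_self, Pi.single_apply]
    · subst h1; simp [Function.update_self, Pi.single_apply, h2, Ne.symm h2]
    · subst h2; simp [Function.update_of_ne h1, Pi.single_apply, h1]
    · simp [Function.update_of_ne h1, Pi.single_apply, Ne.symm h2, h2]
  rw [this, Matrix.det_diagonal, Finset.prod_ite_eq' Finset.univ j (fun _ => c)]
  simp

/-- Affine update of coordinate `j`: `x ↦ update x j (c * x j + t)`. -/
noncomputable def affUpdate (j : Fin d) (c t : ℝ) (x : Fin d → ℝ) : Fin d → ℝ :=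
  Function.update x j (c * x j + t)

lemma affUpdate_eq (j : Fin d) (c t : ℝ) (x : Fin d → ℝ) :
    affUpdate j c t x = scaleCoord j c x + fun i => if i = j then t else 0 := by
  funext i
  by_cases h : i = j
  · subst h; simp [affUpdate, scaleCoord, Function.update_self]
  · simp [affUpdate, scaleCoord, Function.update_of_ne h, h]

lemma measurable_affUpdate (j : Fin d) (c t : ℝ) : Measurable (affUpdate j c t) := by
  apply measurable_pi_lambda
  intro i
  by_cases h : i = j
  · subst h
    simp only [affUpdate, Function.update_self]
    have : Measurable fun x : Fin d → ℝ => c * x i + t := by fun_prop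
    exact this
  · simp only [affUpdate, Function.update_of_ne h]
    exact measurable_pi_apply i

lemma affUpdate_leftInv (j : Fin d) {c : ℝ} (hc : c ≠ 0) (t : ℝ) (x : Fin d → ℝ) :
    affUpdate j c⁻¹ (-(t/c)) (affUpdate j c t x) = x := by
  funext i
  by_cases h : i = j
  · subst h; simp [affUpdate, Function.update_self]; field_simp; ring
  · simp [affUpdate, Function.update_of_ne h]

lemma affUpdate_rightInv (j : Fin d) {c : ℝ} (hc : c ≠ 0) (t : ℝ) (x : Fin d → ℝ) :
    affUpdate j c t (affUpdate j c⁻¹ (-(t/c)) x) = x := by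
  funext i
  by_cases h : i = j
  · subst h; simp [affUpdate, Function.update_self]; field_simp; ring
  · simp [affUpdate, Function.update_of_ne h]

lemma affUpdate_image_eq_preimage (j : Fin d) {c : ℝ} (hc : c ≠ 0) (t : ℝ)
    (S : Set (Fin d → ℝ)) :
    affUpdate j c t '' S = affUpdate j c⁻¹ (-(t/c)) ⁻¹' S :=
  congrFun (Set.image_eq_preimage_of_inverse (affUpdate_leftInv j hc t)
    (affUpdate_rightInv j hc t)) S

lemma measurableSet_affUpdate_image (j : Fin d) {c : ℝ} (hc : c ≠ 0) (t : ℝ)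
    {S : Set (Fin d → ℝ)} (hS : MeasurableSet S) :
    MeasurableSet (affUpdate j c t '' S) := by
  rw [affUpdate_image_eq_preimage j hc t]
  exact measurable_affUpdate _ _ _ hS

lemma volume_affUpdate_image (j : Fin d) {c : ℝ} (hc : 0 < c) (t : ℝ)
    (S : Set (Fin d → ℝ)) :
    volume (affUpdate j c t '' S) = ENNReal.ofReal c * volume S := by
  have h1 : affUpdate j c t '' S
      = (fun y => y + fun i => if i = j then t else 0) '' (scaleCoord j c '' S) := by
    rw [Set.image_image]
    exact Set.image_congr fun x _ => affUpdate_eq j c t x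
  rw [h1, Set.image_add_right, measure_preimage_add_right,
    Measure.addHaar_image_linearMap, scaleCoord_det, abs_of_pos hc]

@[simp] lemma Box.left_lo {d : ℕ} (B : Box d) (j : Fin d) (s : ℝ) :
    (B.left j s).lo = B.lo := rfl
@[simp] lemma Box.left_hi {d : ℕ} (B : Box d) (j : Fin d) (s : ℝ) :
    (B.left j s).hi = Function.update B.hi j s := rfl
@[simp] lemma Box.right_lo {d : ℕ} (B : Box d) (j : Fin d) (s : ℝ) :
    (B.right j s).lo = Function.update B.lo j s := rfl
@[simp] lemma Box.right_hi {d : ℕ} (B : Box d) (j : Fin d) (s : ℝ) :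
    (B.right j s).hi = B.hi := rfl

lemma Box.mem_set' {d : ℕ} {B : Box d} {x : Fin d → ℝ} :
    x ∈ B.set ↔ ∀ i, B.lo i < x i ∧ x i ≤ B.hi i := by
  simp [Box.set, Set.mem_pi, Set.mem_Ioc]

lemma Box.measurableSet_set {d : ℕ} (B : Box d) : MeasurableSet B.set :=
  MeasurableSet.univ_pi fun _ => measurableSet_Ioc

lemma mem_left_of {d : ℕ} {B : Box d} {j : Fin d} {s : ℝ} {x : Fin d → ℝ}
    (hx : x ∈ B.set) (h : x j ≤ s) : x ∈ (B.left j s).set := by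
  rw [Box.mem_set'] at hx ⊢
  intro i
  by_cases hij : i = j
  · subst hij; exact ⟨(hx i).1, by simpa [Box.left] using h⟩
  · simpa [Box.left, Function.update_of_ne hij] using hx i

lemma mem_right_of {d : ℕ} {B : Box d} {j : Fin d} {s : ℝ} {x : Fin d → ℝ}
    (hx : x ∈ B.set) (h : s < x j) : x ∈ (B.right j s).set := by
  rw [Box.mem_set'] at hx ⊢
  intro i
  by_cases hij : i = j
  · subst hij; exact ⟨by simpa [Box.right] using h, (hx i).2⟩
  · simpa [Box.right, Function.update_of_ne hij] using hx i

lemma left_mem_le {d : ℕ} {B : Box d} {j : Fin d} {s : ℝ} {y : Fin d → ℝ}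
    (hy : y ∈ (B.left j s).set) : y j ≤ s := by
  have := (Box.mem_set'.1 hy j).2
  simpa [Box.left] using this

lemma right_mem_lt {d : ℕ} {B : Box d} {j : Fin d} {s : ℝ} {y : Fin d → ℝ}
    (hy : y ∈ (B.right j s).set) : s < y j := by
  have := (Box.mem_set'.1 hy j).1
  simpa [Box.right] using this

lemma Box.left_subset {d : ℕ} {B : Box d} {j : Fin d} {s : ℝ} (h : s ≤ B.hi j) :
    (B.left j s).set ⊆ B.set := by
  intro x hx
  rw [Box.mem_set'] at hx ⊢
  intro i
  by_cases hij : i = j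
  · subst hij
    refine ⟨(hx i).1, le_trans ?_ h⟩
    simpa [Box.left] using (hx i).2
  · simpa [Box.left, Function.update_of_ne hij] using hx i

lemma Box.right_subset {d : ℕ} {B : Box d} {j : Fin d} {s : ℝ} (h : B.lo j ≤ s) :
    (B.right j s).set ⊆ B.set := by
  intro x hx
  rw [Box.mem_set'] at hx ⊢
  intro i
  by_cases hij : i = j
  · subst hij
    refine ⟨lt_of_le_of_lt h ?_, (hx i).2⟩
    simpa [Box.right] using (hx i).1
  · simpa [Box.right, Function.update_of_ne hij] using hx i

lemma Box.volume_set {d : ℕ} (B : Box d) :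
    volume B.set = ∏ i, ENNReal.ofReal (B.hi i - B.lo i) := by
  rw [Box.set, volume_pi_pi]
  simp [Real.volume_Ioc]

lemma Box.volume_erase {d : ℕ} (B : Box d) (j : Fin d) :
    volume B.set = ENNReal.ofReal (B.hi j - B.lo j) *
      ∏ i ∈ Finset.univ.erase j, ENNReal.ofReal (B.hi i - B.lo i) := by
  rw [Box.volume_set, ← Finset.mul_prod_erase Finset.univ _ (Finset.mem_univ j)]

lemma Box.volume_left {d : ℕ} (B : Box d) (j : Fin d) (s : ℝ) :
    volume (B.left j s).set = ENNReal.ofReal (s - B.lo j) *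
      ∏ i ∈ Finset.univ.erase j, ENNReal.ofReal (B.hi i - B.lo i) := by
  rw [Box.volume_set]
  have hpt : ∀ i ∈ Finset.univ, ENNReal.ofReal ((B.left j s).hi i - (B.left j s).lo i)
      = Function.update (fun i => ENNReal.ofReal (B.hi i - B.lo i)) j
          (ENNReal.ofReal (s - B.lo j)) i := by
    intro i _
    by_cases hij : i = j
    · subst hij; simp [Box.left]
    · simp [Box.left, Function.update_of_ne hij]
  rw [Finset.prod_congr rfl hpt, Finset.prod_update_of_mem (Finset.mem_univ j),
    ← Finset.erase_eq]

lemma Box.volume_right {d : ℕ} (B : Box d) (j : Fin d) (s : ℝ) :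
    volume (B.right j s).set = ENNReal.ofReal (B.hi j - s) *
      ∏ i ∈ Finset.univ.erase j, ENNReal.ofReal (B.hi i - B.lo i) := by
  rw [Box.volume_set]
  have hpt : ∀ i ∈ Finset.univ, ENNReal.ofReal ((B.right j s).hi i - (B.right j s).lo i)
      = Function.update (fun i => ENNReal.ofReal (B.hi i - B.lo i)) j
          (ENNReal.ofReal (B.hi j - s)) i := by
    intro i _
    by_cases hij : i = j
    · subst hij; simp [Box.right]
    · simp [Box.right, Function.update_of_ne hij]
  rw [Finset.prod_congr rfl hpt, Finset.prod_update_of_mem (Finset.mem_univ j),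
    ← Finset.erase_eq]

lemma Box.volume_set_ne_zero {d : ℕ} {B : Box d} (h : ∀ i, B.lo i < B.hi i) :
    volume B.set ≠ 0 := by
  rw [Box.volume_set]
  exact Finset.prod_ne_zero_iff.2 fun i _ =>
    (ENNReal.ofReal_pos.2 (sub_pos.2 (h i))).ne'

lemma Box.volume_set_ne_top {d : ℕ} (B : Box d) : volume B.set ≠ ⊤ := by
  rw [Box.volume_set]
  exact (ENNReal.prod_lt_top fun i _ => ENNReal.ofReal_lt_top).ne

lemma localMove_eq_affL {d : ℕ} {B : Box d} {j : Fin d} {s θ c t : ℝ} {y : Fin d → ℝ}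
    (hc : c = θ * (B.hi j - B.lo j) / (s - B.lo j)) (ht : t = B.lo j * (1 - c))
    (hy : y j ≤ s) : localMove B j s θ y = affUpdate j c t y := by
  subst hc ht
  simp only [localMove, affUpdate, if_pos hy]
  congr 1
  ring

lemma localMove_eq_affR {d : ℕ} {B : Box d} {j : Fin d} {s θ c t : ℝ} {y : Fin d → ℝ}
    (hc : c = (1 - θ) * (B.hi j - B.lo j) / (B.hi j - s)) (ht : t = B.hi j * (1 - c))
    (hy : ¬ y j ≤ s) : localMove B j s θ y = affUpdate j c t y := by
  subst hc ht
  simp only [localMove, affUpdate, if_neg hy]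
  congr 1
  ring

lemma treeCDF_mapsTo {d : ℕ} (T : DTree d) : ∀ (B : Box d), T.valid B →
    ∀ x ∈ B.set, treeCDF T B x ∈ B.set := by
  induction T with
  | leaf => intro B _ x hx; simpa [treeCDF] using hx
  | node j s θ l r ihl ihr =>
    intro B hv x hx
    obtain ⟨hlh, hlos, hshi, hθ0, hθ1, hvl, hvr⟩ := hv
    have hwidth : (0:ℝ) < B.hi j - B.lo j := sub_pos.2 (hlh j)
    by_cases hxj : x j ≤ s
    · have hy : treeCDF l (B.left j s) x ∈ (B.left j s).set :=
        ihl _ hvl x (mem_left_of hx hxj)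
      have hyj : treeCDF l (B.left j s) x j ≤ s := left_mem_le hy
      have hkey : (θ * (B.hi j - B.lo j) / (s - B.lo j)) * (s - B.lo j)
          = θ * (B.hi j - B.lo j) := div_mul_cancel₀ _ (sub_pos.2 hlos).ne'
      have hc : 0 < θ * (B.hi j - B.lo j) / (s - B.lo j) :=
        div_pos (mul_pos hθ0 hwidth) (sub_pos.2 hlos)
      simp only [treeCDF, if_pos hxj]
      rw [localMove_eq_affL rfl rfl hyj]
      rw [Box.mem_set'] at hy ⊢
      intro i
      by_cases hij : i = j
      · subst hij
        have h1 : B.lo i < treeCDF l (B.left i s) x i := by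
          simpa using (hy i).1
        constructor
        · simp only [affUpdate, Function.update_self]
          nlinarith [hkey, hc, mul_pos hc (sub_pos.2 h1)]
        · simp only [affUpdate, Function.update_self]
          nlinarith [hkey, hc, mul_nonneg hc.le (sub_nonneg.2 hyj),
            mul_nonneg (sub_nonneg.2 hθ1.le) hwidth.le]
      · simp only [affUpdate, Function.update_of_ne hij]
        simpa [Function.update_of_ne hij] using hy i
    · have hy : treeCDF r (B.right j s) x ∈ (B.right j s).set :=
        ihr _ hvr x (mem_right_of hx (not_le.1 hxj))
      have hyj : s < treeCDF r (B.right j s) x j := right_mem_lt hy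
      have hkey : ((1 - θ) * (B.hi j - B.lo j) / (B.hi j - s)) * (B.hi j - s)
          = (1 - θ) * (B.hi j - B.lo j) := div_mul_cancel₀ _ (sub_pos.2 hshi).ne'
      have hc : 0 < (1 - θ) * (B.hi j - B.lo j) / (B.hi j - s) :=
        div_pos (mul_pos (sub_pos.2 hθ1) hwidth) (sub_pos.2 hshi)
      simp only [treeCDF, if_neg hxj]
      rw [localMove_eq_affR rfl rfl (not_le.2 hyj)]
      rw [Box.mem_set'] at hy ⊢
      intro i
      by_cases hij : i = j
      · subst hij
        have h2 : treeCDF r (B.right i s) x i ≤ B.hi i := by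
          simpa using (hy i).2
        constructor
        · simp only [affUpdate, Function.update_self]
          nlinarith [hkey, hc, mul_pos hc (sub_pos.2 hyj), mul_pos hθ0 hwidth]
        · simp only [affUpdate, Function.update_self]
          nlinarith [hkey, hc, mul_nonneg hc.le (sub_nonneg.2 h2)]
      · simp only [affUpdate, Function.update_of_ne hij]
        simpa [Function.update_of_ne hij] using hy i

lemma treeMeasure_null {d : ℕ} (T : DTree d) : ∀ (B : Box d), T.valid B →
    ∀ S : Set (Fin d → ℝ), Disjoint S B.set → treeMeasure T B S = 0 := by
  induction T with
  | leaf =>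
    intro B _ S hdisj
    simp only [treeMeasure, Measure.smul_apply, smul_eq_mul,
      Measure.restrict_apply' (Box.measurableSet_set B)]
    rw [Set.disjoint_iff_inter_eq_empty.1 hdisj]
    simp
  | node j s θ l r ihl ihr =>
    intro B hv S hdisj
    obtain ⟨hlh, hlos, hshi, hθ0, hθ1, hvl, hvr⟩ := hv
    have h1 : Disjoint S (B.left j s).set :=
      hdisj.mono_right (Box.left_subset hshi.le)
    have h2 : Disjoint S (B.right j s).set :=
      hdisj.mono_right (Box.right_subset hlos.le)
    simp only [treeMeasure, Measure.coe_add, Pi.add_apply, Measure.smul_apply,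
      smul_eq_mul, ihl _ hvl S h1, ihr _ hvr S h2, mul_zero, add_zero]

lemma treeCDF_key {d : ℕ} (T : DTree d) : ∀ (B : Box d), T.valid B →
    ∀ S : Set (Fin d → ℝ), MeasurableSet S → S ⊆ B.set →
      MeasurableSet (treeCDF T B '' S) ∧
        volume (treeCDF T B '' S) = volume B.set * treeMeasure T B S := by
  induction T with
  | leaf =>
    intro B hv S hS hSB
    have himg : treeCDF DTree.leaf B '' S = S := by simp [treeCDF]
    rw [himg]
    refine ⟨hS, ?_⟩
    simp only [treeMeasure, Measure.smul_apply, smul_eq_mul, Measure.restrict_apply hS]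
    rw [Set.inter_eq_left.2 hSB, ← mul_assoc,
      ENNReal.mul_inv_cancel (Box.volume_set_ne_zero hv) (Box.volume_set_ne_top B), one_mul]
  | node j s θ l r ihl ihr =>
    intro B hv S hS hSB
    obtain ⟨hlh, hlos, hshi, hθ0, hθ1, hvl, hvr⟩ := hv
    have hwidth : (0:ℝ) < B.hi j - B.lo j := sub_pos.2 (hlh j)
    set cL := θ * (B.hi j - B.lo j) / (s - B.lo j) with hcLdef
    set cR := (1 - θ) * (B.hi j - B.lo j) / (B.hi j - s) with hcRdef
    set tL := B.lo j * (1 - cL) with htLdef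
    set tR := B.hi j * (1 - cR) with htRdef
    have hcL : 0 < cL := div_pos (mul_pos hθ0 hwidth) (sub_pos.2 hlos)
    have hcR : 0 < cR := div_pos (mul_pos (sub_pos.2 hθ1) hwidth) (sub_pos.2 hshi)
    have hkeyL : cL * (s - B.lo j) = θ * (B.hi j - B.lo j) := by
      rw [hcLdef]; exact div_mul_cancel₀ _ (sub_pos.2 hlos).ne'
    have hkeyR : cR * (B.hi j - s) = (1 - θ) * (B.hi j - B.lo j) := by
      rw [hcRdef]; exact div_mul_cancel₀ _ (sub_pos.2 hshi).ne'
    set Sl := S ∩ {x | x j ≤ s} with hSldef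
    set Sr := S ∩ {x | ¬ x j ≤ s} with hSrdef
    have hmle : MeasurableSet {x : Fin d → ℝ | x j ≤ s} :=
      measurableSet_le (measurable_pi_apply j) measurable_const
    have hSlm : MeasurableSet Sl := hS.inter hmle
    have hSrm : MeasurableSet Sr := hS.inter hmle.compl
    have hSlB : Sl ⊆ (B.left j s).set := fun x hx => mem_left_of (hSB hx.1) hx.2
    have hSrB : Sr ⊆ (B.right j s).set := fun x hx => mem_right_of (hSB hx.1) (not_le.1 hx.2)
    obtain ⟨hMl, hEl⟩ := ihl (B.left j s) hvl Sl hSlm hSlB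
    obtain ⟨hMr, hEr⟩ := ihr (B.right j s) hvr Sr hSrm hSrB
    have hmapsl : ∀ x ∈ Sl, treeCDF l (B.left j s) x ∈ (B.left j s).set :=
      fun x hx => treeCDF_mapsTo l (B.left j s) hvl x (hSlB hx)
    have hmapsr : ∀ x ∈ Sr, treeCDF r (B.right j s) x ∈ (B.right j s).set :=
      fun x hx => treeCDF_mapsTo r (B.right j s) hvr x (hSrB hx)
    have hptl : ∀ x ∈ Sl, treeCDF (DTree.node j s θ l r) B x
        = affUpdate j cL tL (treeCDF l (B.left j s) x) := by
      intro x hx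
      have hxj : x j ≤ s := hx.2
      have hyj : treeCDF l (B.left j s) x j ≤ s := left_mem_le (hmapsl x hx)
      simp only [treeCDF, if_pos hxj]
      exact localMove_eq_affL hcLdef htLdef hyj
    have hptr : ∀ x ∈ Sr, treeCDF (DTree.node j s θ l r) B x
        = affUpdate j cR tR (treeCDF r (B.right j s) x) := by
      intro x hx
      have hxj : ¬ x j ≤ s := hx.2
      have hyj : ¬ treeCDF r (B.right j s) x j ≤ s :=
        not_le.2 (right_mem_lt (hmapsr x hx))
      simp only [treeCDF, if_neg hxj]
      exact localMove_eq_affR hcRdef htRdef hyj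
    have himg : treeCDF (DTree.node j s θ l r) B '' S
        = affUpdate j cL tL '' (treeCDF l (B.left j s) '' Sl)
          ∪ affUpdate j cR tR '' (treeCDF r (B.right j s) '' Sr) := by
      apply Set.Subset.antisymm
      · rintro _ ⟨x, hxS, rfl⟩
        by_cases hxj : x j ≤ s
        · exact Or.inl ⟨_, ⟨x, ⟨hxS, hxj⟩, rfl⟩, (hptl x ⟨hxS, hxj⟩).symm⟩
        · exact Or.inr ⟨_, ⟨x, ⟨hxS, hxj⟩, rfl⟩, (hptr x ⟨hxS, hxj⟩).symm⟩
      · rintro z (⟨_, ⟨x, hx, rfl⟩, rfl⟩ | ⟨_, ⟨x, hx, rfl⟩, rfl⟩)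
        · exact ⟨x, hx.1, hptl x hx⟩
        · exact ⟨x, hx.1, hptr x hx⟩
    have hbL : ∀ z ∈ affUpdate j cL tL '' (treeCDF l (B.left j s) '' Sl),
        z j ≤ B.lo j + θ * (B.hi j - B.lo j) := by
      rintro _ ⟨y, ⟨x, hx, rfl⟩, rfl⟩
      have hyj : treeCDF l (B.left j s) x j ≤ s := left_mem_le (hmapsl x hx)
      have hz : affUpdate j cL tL (treeCDF l (B.left j s) x) j
          = cL * treeCDF l (B.left j s) x j + tL := by
        simp [affUpdate]
      rw [hz, htLdef]
      nlinarith [hkeyL, mul_nonneg hcL.le (sub_nonneg.2 hyj)]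
    have hbR : ∀ z ∈ affUpdate j cR tR '' (treeCDF r (B.right j s) '' Sr),
        B.lo j + θ * (B.hi j - B.lo j) < z j := by
      rintro _ ⟨y, ⟨x, hx, rfl⟩, rfl⟩
      have hyj : s < treeCDF r (B.right j s) x j := right_mem_lt (hmapsr x hx)
      have hz : affUpdate j cR tR (treeCDF r (B.right j s) x) j
          = cR * treeCDF r (B.right j s) x j + tR := by
        simp [affUpdate]
      rw [hz, htRdef]
      nlinarith [hkeyR, mul_pos hcR (sub_pos.2 hyj)]
    have hdisj : Disjoint (affUpdate j cL tL '' (treeCDF l (B.left j s) '' Sl))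
        (affUpdate j cR tR '' (treeCDF r (B.right j s) '' Sr)) := by
      rw [Set.disjoint_left]
      intro z h1 h2
      exact absurd (hbR z h2) (not_lt.2 (hbL z h1))
    have hmeasR : MeasurableSet (affUpdate j cR tR '' (treeCDF r (B.right j s) '' Sr)) :=
      measurableSet_affUpdate_image j hcR.ne' tR hMr
    refine ⟨by rw [himg]; exact (measurableSet_affUpdate_image j hcL.ne' tL hMl).union hmeasR, ?_⟩
    have hμl : treeMeasure l (B.left j s) S = treeMeasure l (B.left j s) Sl := by
      refine le_antisymm ?_ (measure_mono Set.inter_subset_left)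
      have hdecomp : S = Sl ∪ (S \ Sl) := (Set.union_diff_cancel Set.inter_subset_left).symm
      have hnull : treeMeasure l (B.left j s) (S \ Sl) = 0 := by
        apply treeMeasure_null l (B.left j s) hvl
        rw [Set.disjoint_left]
        intro x hxm hxB
        exact hxm.2 ⟨hxm.1, left_mem_le hxB⟩
      calc treeMeasure l (B.left j s) S
          ≤ treeMeasure l (B.left j s) Sl + treeMeasure l (B.left j s) (S \ Sl) := by
            nth_rewrite 1 [hdecomp]; exact measure_union_le _ _
        _ = treeMeasure l (B.left j s) Sl := by rw [hnull, add_zero]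
    have hμr : treeMeasure r (B.right j s) S = treeMeasure r (B.right j s) Sr := by
      refine le_antisymm ?_ (measure_mono Set.inter_subset_left)
      have hdecomp : S = Sr ∪ (S \ Sr) := (Set.union_diff_cancel Set.inter_subset_left).symm
      have hnull : treeMeasure r (B.right j s) (S \ Sr) = 0 := by
        apply treeMeasure_null r (B.right j s) hvr
        rw [Set.disjoint_left]
        intro x hxm hxB
        exact hxm.2 ⟨hxm.1, not_le.2 (right_mem_lt hxB)⟩
      calc treeMeasure r (B.right j s) S
          ≤ treeMeasure r (B.right j s) Sr + treeMeasure r (B.right j s) (S \ Sr) := by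
            nth_rewrite 1 [hdecomp]; exact measure_union_le _ _
        _ = treeMeasure r (B.right j s) Sr := by rw [hnull, add_zero]
    have hμ : treeMeasure (DTree.node j s θ l r) B S
        = ENNReal.ofReal θ * treeMeasure l (B.left j s) Sl
          + ENNReal.ofReal (1 - θ) * treeMeasure r (B.right j s) Sr := by
      simp only [treeMeasure, Measure.coe_add, Pi.add_apply, Measure.smul_apply,
        smul_eq_mul, hμl, hμr]
    have e1 : ENNReal.ofReal cL * volume (B.left j s).set
        = volume B.set * ENNReal.ofReal θ := by
      rw [Box.volume_left, Box.volume_erase B j, ← mul_assoc,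
        ← ENNReal.ofReal_mul hcL.le]
      rw [show cL * (s - B.lo j) = θ * (B.hi j - B.lo j) from hkeyL,
        ENNReal.ofReal_mul hθ0.le]
      ring
    have e2 : ENNReal.ofReal cR * volume (B.right j s).set
        = volume B.set * ENNReal.ofReal (1 - θ) := by
      rw [Box.volume_right, Box.volume_erase B j, ← mul_assoc,
        ← ENNReal.ofReal_mul hcR.le]
      rw [show cR * (B.hi j - s) = (1 - θ) * (B.hi j - B.lo j) from hkeyR,
        ENNReal.ofReal_mul (by linarith : (0:ℝ) ≤ 1 - θ)]
      ring
    rw [himg, measure_union hdisj hmeasR, volume_affUpdate_image j hcL tL,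
      volume_affUpdate_image j hcR tR, hEl, hEr, hμ]
    calc ENNReal.ofReal cL * (volume (B.left j s).set * treeMeasure l (B.left j s) Sl)
          + ENNReal.ofReal cR * (volume (B.right j s).set * treeMeasure r (B.right j s) Sr)
        = (ENNReal.ofReal cL * volume (B.left j s).set) * treeMeasure l (B.left j s) Sl
          + (ENNReal.ofReal cR * volume (B.right j s).set) * treeMeasure r (B.right j s) Sr := by
          ring
      _ = volume B.set * (ENNReal.ofReal θ * treeMeasure l (B.left j s) Sl
          + ENNReal.ofReal (1 - θ) * treeMeasure r (B.right j s) Sr) := by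
          rw [e1, e2]; ring

/-- For a conditionally uniform probability measure `G ∈ 𝒫_T` on a finite
valid dyadic partition tree `T` of `(0,1]^d` with tree-CDF `𝐆`, one has
`G(B) = μ(𝐆(B))` for every Borel set `B ⊆ (0,1]^d`, where `μ` is Lebesgue measure. -/
theorem stmt7 {d : ℕ} (T : DTree d) (hT : T.valid (unitBox d)) :
    ∀ B : Set (Fin d → ℝ), MeasurableSet B → B ⊆ (unitBox d).set →
      treeMeasure T (unitBox d) B = volume (treeCDF T (unitBox d) '' B) := by
  intro B hB hBsub
  have h := (treeCDF_key T (unitBox d) hT B hB hBsub).2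
  have h1 : volume (unitBox d).set = 1 := by
    rw [Box.volume_set]
    simp [unitBox]
  rw [h, h1, one_mul]
end

section
/- Let p, q₀ ∈ (0,1) and c ∈ (0,1], and define q_c = (1−c)q₀ + c·p. Then p·log(q_c/q₀) + (1−p)·log((1−q_c)/(1−q₀)) ≥ c·[p log(p/q₀) + (1−p) log((1−p)/(1−q₀))] ≥ 0, with the right-hand quantity strictly positive unless p = q₀. -/
open Set

lemma log_shrink {x c : ℝ} (hx : 0 < x) (hc0 : 0 ≤ c) (hc1 : c ≤ 1) :
    c * Real.log x ≤ Real.log ((1 - c) + c * x) := by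
  have h := strictConcaveOn_log_Ioi.concaveOn.2 (mem_Ioi.2 one_pos) (mem_Ioi.2 hx)
    (by linarith : (0:ℝ) ≤ 1 - c) hc0 (by ring)
  simpa [smul_eq_mul, Real.log_one] using h

/-- single-node shrinkage improvement bound.  For `p, q₀ ∈ (0,1)`,
`c ∈ (0,1]` and `q_c = (1−c)q₀ + c·p`:
`p log(q_c/q₀) + (1−p) log((1−q_c)/(1−q₀)) ≥ c·KL(p‖q₀) ≥ 0`, where
`KL(p‖q₀) = p log(p/q₀) + (1−p) log((1−p)/(1−q₀))`, and `c·KL(p‖q₀) > 0` unless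
`p = q₀`. -/
theorem stmt13
    (p q₀ c qc : ℝ) (hp : p ∈ Ioo (0:ℝ) 1) (hq : q₀ ∈ Ioo (0:ℝ) 1)
    (hc : c ∈ Ioc (0:ℝ) 1) (hqc : qc = (1 - c) * q₀ + c * p) :
    c * (p * Real.log (p / q₀) + (1 - p) * Real.log ((1 - p) / (1 - q₀))) ≤
        p * Real.log (qc / q₀) + (1 - p) * Real.log ((1 - qc) / (1 - q₀)) ∧
      0 ≤ c * (p * Real.log (p / q₀) + (1 - p) * Real.log ((1 - p) / (1 - q₀))) ∧
      (p ≠ q₀ →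
        0 < c * (p * Real.log (p / q₀) + (1 - p) * Real.log ((1 - p) / (1 - q₀)))) := by
  obtain ⟨hp0, hp1⟩ := hp
  obtain ⟨hq0, hq1⟩ := hq
  obtain ⟨hc0, hc1⟩ := hc
  have hp1' : 0 < 1 - p := by linarith
  have hq1' : 0 < 1 - q₀ := by linarith
  -- KL nonnegativity
  have hkl : ∀ hne : p ≠ q₀,
      0 < p * Real.log (p / q₀) + (1 - p) * Real.log ((1 - p) / (1 - q₀)) := by
    intro hne
    have ha : 0 < q₀ / p := by positivity
    have hb : 0 < (1 - q₀) / (1 - p) := by positivity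
    have h1 : Real.log (q₀ / p) < q₀ / p - 1 :=
      Real.log_lt_sub_one_of_pos ha (fun h => hne (by
        field_simp at h
        linarith))
    have h2 : Real.log ((1 - q₀) / (1 - p)) ≤ (1 - q₀) / (1 - p) - 1 :=
      Real.log_le_sub_one_of_pos hb
    have e1 : Real.log (p / q₀) = -Real.log (q₀ / p) := by
      rw [← Real.log_inv]; congr 1; field_simp
    have e2 : Real.log ((1 - p) / (1 - q₀)) = -Real.log ((1 - q₀) / (1 - p)) := by
      rw [← Real.log_inv]; congr 1; field_simp
    rw [e1, e2]
    have k1 : p * Real.log (q₀ / p) < q₀ - p := by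
      have := mul_lt_mul_of_pos_left h1 hp0
      have : p * Real.log (q₀ / p) < p * (q₀ / p - 1) := this
      calc p * Real.log (q₀ / p) < p * (q₀ / p - 1) := this
        _ = q₀ - p := by field_simp
    have k2 : (1 - p) * Real.log ((1 - q₀) / (1 - p)) ≤ p - q₀ := by
      have := mul_le_mul_of_nonneg_left h2 hp1'.le
      calc (1 - p) * Real.log ((1 - q₀) / (1 - p)) ≤ (1 - p) * ((1 - q₀) / (1 - p) - 1) := this
        _ = p - q₀ := by field_simp; ring
    nlinarith
  have hkl0 : 0 ≤ p * Real.log (p / q₀) + (1 - p) * Real.log ((1 - p) / (1 - q₀)) := by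
    by_cases hne : p = q₀
    · subst hne
      rw [div_self hp0.ne', div_self hp1'.ne']
      simp
    · exact (hkl hne).le
  refine ⟨?_, by positivity, fun hne => mul_pos hc0 (hkl hne)⟩
  -- shrinkage inequality
  have hA : c * Real.log (p / q₀) ≤ Real.log (qc / q₀) := by
    have := log_shrink (x := p / q₀) (by positivity) hc0.le hc1
    have e : (1 - c) + c * (p / q₀) = qc / q₀ := by
      rw [hqc]; field_simp
    rwa [e] at this
  have hB : c * Real.log ((1 - p) / (1 - q₀)) ≤ Real.log ((1 - qc) / (1 - q₀)) := by
    have := log_shrink (x := (1 - p) / (1 - q₀)) (by positivity) hc0.le hc1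
    have e : (1 - c) + c * ((1 - p) / (1 - q₀)) = (1 - qc) / (1 - q₀) := by
      rw [hqc]; field_simp; ring
    rwa [e] at this
  nlinarith [mul_le_mul_of_nonneg_left hA hp0.le, mul_le_mul_of_nonneg_left hB hp1'.le]
end

section
/- Let F be a probability measure on (0,1] with piecewise constant density f(x) = ∑_{i=1}^{I} β_i 1_{(c_{i−1}, c_i]}(x), where β_i > 0 and 0 = c₀ < c₁ < ⋯ < c_I = 1. Then there exist finitely many probability measures G₁,…,G_{I−1}, each piecewise uniform on a two-leaf dyadic tree (i.e., each G_k has density taking exactly two positive constant values on an interval partition (0,s_k], (s_k,1]), whose CDFs 𝐆₁,…,𝐆_{I−1} satisfy: the pushforward of F under 𝐆_{I−1} ∘ ⋯ ∘ 𝐆₁ is the uniform distribution on (0,1]. -/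
open MeasureTheory Set

/-- `compFrom F i n = F (i+n-1) ∘ ⋯ ∘ F (i+1) ∘ F i` (and the identity when `n = 0`). -/
def compFrom {α : Type*} (F : ℕ → α → α) (i : ℕ) : ℕ → α → α
  | 0 => id
  | n + 1 => F (i + n) ∘ compFrom F i n

noncomputable def tl (s a : ℝ) (x : ℝ) : ℝ :=
  if x ≤ s then a / s * x else a + (1 - a) / (1 - s) * (x - s)

lemma tl_strictMono {s a : ℝ} (hs : s ∈ Ioo (0:ℝ) 1) (ha : a ∈ Ioo (0:ℝ) 1) :
    StrictMono (tl s a) := by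
  obtain ⟨hs0, hs1⟩ := hs; obtain ⟨ha0, ha1⟩ := ha
  intro x y hxy
  unfold tl
  have hp : 0 < a / s := div_pos ha0 hs0
  have hg : 0 < (1 - a) / (1 - s) := div_pos (by linarith) (by linarith)
  split_ifs with h1 h2 h2
  · nlinarith
  · have hys : s < y := not_le.1 h2
    have : a / s * x ≤ a / s * s := by nlinarith
    have : a / s * s = a := by field_simp
    nlinarith
  · exfalso; linarith [not_le.1 h1]
  · have hxs : s < x := not_le.1 h1
    nlinarith

lemma tl_zero {s a : ℝ} (hs : s ∈ Ioo (0:ℝ) 1) : tl s a 0 = 0 := by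
  simp [tl, hs.1.le]

lemma tl_one {s a : ℝ} (hs : s ∈ Ioo (0:ℝ) 1) : tl s a 1 = 1 := by
  have h1 : ¬ (1:ℝ) ≤ s := not_le.2 hs.2
  have : (1:ℝ) - s ≠ 0 := by have := hs.2; intro h; linarith
  simp only [tl, if_neg h1]
  field_simp
  ring

lemma tl_inv {s a : ℝ} (hs : s ∈ Ioo (0:ℝ) 1) (ha : a ∈ Ioo (0:ℝ) 1) (x : ℝ) :
    tl a s (tl s a x) = x := by
  obtain ⟨hs0, hs1⟩ := hs; obtain ⟨ha0, ha1⟩ := ha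
  unfold tl
  split_ifs with h1 h2 h2
  · field_simp
  · exfalso
    have : a / s * x ≤ a / s * s := by
      have : 0 < a / s := div_pos ha0 hs0
      nlinarith
    have hss : a / s * s = a := by field_simp
    push_neg at h2; nlinarith
  · exfalso
    push_neg at h1
    have hg : 0 < (1 - a) / (1 - s) := div_pos (by linarith) (by linarith)
    nlinarith
  · push_neg at h1
    have hs' : (1:ℝ) - s ≠ 0 := by intro h; linarith
    have ha' : (1:ℝ) - a ≠ 0 := by intro h; linarith
    field_simp
    ring

lemma tl_surj {s a : ℝ} (hs : s ∈ Ioo (0:ℝ) 1) (ha : a ∈ Ioo (0:ℝ) 1) :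
    Function.Surjective (tl s a) :=
  fun y => ⟨tl a s y, tl_inv ha hs y⟩

lemma compFrom_succ_left {α : Type*} (F : ℕ → α → α) (i n : ℕ) :
    compFrom F i (n + 1) = compFrom F (i + 1) n ∘ F i := by
  induction n with
  | zero => simp [compFrom]
  | succ n ih =>
      show F (i + (n+1)) ∘ compFrom F i (n+1) = _
      rw [ih]
      show F (i + (n+1)) ∘ (compFrom F (i+1) n ∘ F i) = (F (i + 1 + n) ∘ compFrom F (i+1) n) ∘ F i
      rw [show i + (n+1) = i + 1 + n by omega]
      rfl

lemma compFrom_shift {α : Type*} (F : ℕ → α → α) (i n : ℕ) :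
    compFrom F (i + 1) n = compFrom (fun k => F (k + 1)) i n := by
  induction n with
  | zero => rfl
  | succ n ih =>
      show F (i + 1 + n) ∘ compFrom F (i+1) n = (fun k => F (k+1)) (i + n) ∘ compFrom _ i n
      rw [ih, show i + 1 + n = (i + n) + 1 by omega]

lemma c_mono {I : ℕ} {c : ℕ → ℝ} (h : ∀ i < I, c i < c (i + 1)) :
    ∀ {i j}, i ≤ j → j ≤ I → c i ≤ c j := by
  intro i j hij hj
  induction j with
  | zero => interval_cases i; rfl
  | succ n ih =>
      rcases Nat.eq_or_lt_of_le hij with rfl | hlt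
      · rfl
      · exact le_trans (ih (by omega) (by omega)) (h n (by omega)).le

noncomputable def phi (I : ℕ) (c β : ℕ → ℝ) (x : ℝ) : ℝ :=
  ∑ i ∈ Finset.range I, β i * (min x (c (i + 1)) - min x (c i))

lemma ofReal_max0 (x : ℝ) : ENNReal.ofReal (max 0 x) = ENNReal.ofReal x := by
  rcases le_total x 0 with h | h
  · rw [max_eq_left h, ENNReal.ofReal_zero, eq_comm, ENNReal.ofReal_eq_zero]; exact h
  · rw [max_eq_right h]

lemma tl_of_ge {s a u : ℝ} (hs : s ∈ Ioo (0:ℝ) 1) (hu : s ≤ u) :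
    tl s a u = a + (1 - a) / (1 - s) * (u - s) := by
  unfold tl
  split_ifs with h
  · have : u = s := le_antisymm h hu
    subst this
    rw [sub_self, mul_zero, add_zero, div_mul_cancel₀ _ hs.1.ne']
  · rfl

lemma factor (I : ℕ) : 1 ≤ I → ∀ c β : ℕ → ℝ, c 0 = 0 → c I = 1 →
    (∀ i < I, c i < c (i + 1)) → (∀ i < I, 0 < β i) →
    (∑ i ∈ Finset.range I, β i * (c (i + 1) - c i)) = 1 →
    ∃ s a : ℕ → ℝ,
      (∀ k < I - 1, s k ∈ Ioo (0:ℝ) 1 ∧ a k ∈ Ioo (0:ℝ) 1) ∧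
      ∀ x ∈ Icc (0:ℝ) 1, compFrom (fun k => tl (s k) (a k)) 0 (I - 1) x = phi I c β x := by
  induction I with
  | zero => omega
  | succ n ih =>
    intro _ c β hc0 hcI hcm hβ hmass
    rcases Nat.eq_zero_or_pos n with rfl | hn
    · -- base case: one piece
      refine ⟨fun _ => 1/2, fun _ => 1/2, fun k hk => absurd hk (by omega), ?_⟩
      intro x hx
      have hβ0 : β 0 = 1 := by
        rw [Finset.sum_range_one, hc0, hcI] at hmass; linarith
      show x = phi 1 c β x
      rw [phi, Finset.sum_range_one, hc0, hcI, hβ0, min_eq_left hx.2,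
        min_eq_right hx.1]
      ring
    · -- inductive step
      obtain ⟨m, rfl⟩ : ∃ m, n = m + 1 := ⟨n - 1, by omega⟩
      have hc1pos : 0 < c 1 := by have := hcm 0 (by omega); linarith [hc0 ▸ this]
      have hc12 : c 1 < c 2 := hcm 1 (by omega)
      have hcmono : ∀ i j, i ≤ j → j ≤ m + 2 → c i ≤ c j :=
        fun i j hij hj => c_mono hcm hij hj
      have hc1lt : c 1 < 1 := by
        have h2 : c 2 ≤ c (m + 2) := hcmono 2 (m + 2) (by omega) (by omega)
        rw [hcI] at h2; linarith
      have hβ0 := hβ 0 (by omega)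
      have hβ1 := hβ 1 (by omega)
      set D : ℝ := β 0 * c 1 + β 1 * (1 - c 1) with hDdef
      have hD : 0 < D := by
        have := mul_pos hβ0 hc1pos
        have := mul_pos hβ1 (by linarith : (0:ℝ) < 1 - c 1)
        rw [hDdef]; linarith
      set a0 : ℝ := β 0 * c 1 / D with ha0def
      have ha0 : a0 ∈ Ioo (0:ℝ) 1 := by
        constructor
        · exact div_pos (mul_pos hβ0 hc1pos) hD
        · rw [ha0def, div_lt_one hD, hDdef]; nlinarith
      have hs0 : c 1 ∈ Ioo (0:ℝ) 1 := ⟨hc1pos, hc1lt⟩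
      set G : ℝ → ℝ := tl (c 1) a0 with hGdef
      have hGmono : StrictMono G := tl_strictMono hs0 ha0
      set g : ℝ := (1 - a0) / (1 - c 1) with hgdef
      have h1a : 1 - a0 = β 1 * (1 - c 1) / D := by
        rw [eq_div_iff hD.ne', ha0def]
        field_simp
        rw [hDdef]; ring
      have hg' : g = β 1 / D := by
        rw [hgdef, h1a, div_div, mul_comm D (1 - c 1), ← div_div,
          mul_div_assoc, div_self (by linarith : (1:ℝ) - c 1 ≠ 0), mul_one]
      have hgpos : 0 < g := by rw [hg']; exact div_pos hβ1 hD
      have key1 : D * g = β 1 := by rw [hg', mul_div_cancel₀ _ hD.ne']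
      have keya : D * a0 = β 0 * c 1 := by rw [ha0def, mul_div_cancel₀ _ hD.ne']
      have G0 : G 0 = 0 := tl_zero hs0
      have G1 : G 1 = 1 := tl_one hs0
      have G_ge : ∀ u, c 1 ≤ u → G u = a0 + g * (u - c 1) := fun u hu => tl_of_ge hs0 hu
      have Gdiff : ∀ u v, c 1 ≤ v → v ≤ u → G u - G v = g * (u - v) := by
        intro u v hv hvu
        rw [G_ge u (hv.trans hvu), G_ge v hv]; ring
      set c' : ℕ → ℝ := fun i => if i = 0 then 0 else G (c (i + 1)) with hc'def
      set β' : ℕ → ℝ := fun i => if i = 0 then D else β (i + 1) / g with hβ'def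
      have hc'0 : c' 0 = 0 := by simp [hc'def]
      have hc's : ∀ i : ℕ, c' (i + 1) = G (c (i + 2)) := by
        intro i; simp only [hc'def]
        rw [if_neg (Nat.succ_ne_zero i)]
      have hβ'0 : β' 0 = D := by simp [hβ'def]
      have hβ's : ∀ i : ℕ, β' (i + 1) = β (i + 2) / g := by
        intro i; simp only [hβ'def]
        rw [if_neg (Nat.succ_ne_zero i)]
      have hc'I : c' (m + 1) = 1 := by rw [hc's m, hcI, G1]
      have hc'm : ∀ i < m + 1, c' i < c' (i + 1) := by
        intro i hi
        rcases Nat.eq_zero_or_pos i with rfl | hi'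
        · rw [hc'0, hc's 0, ← G0]
          exact hGmono (by linarith)
        · obtain ⟨j, rfl⟩ : ∃ j, i = j + 1 := ⟨i - 1, by omega⟩
          rw [hc's j, hc's (j + 1)]
          exact hGmono (hcm (j + 2) (by omega))
      have hβ' : ∀ i < m + 1, 0 < β' i := by
        intro i hi
        rcases Nat.eq_zero_or_pos i with rfl | hi'
        · rw [hβ'0]; exact hD
        · obtain ⟨j, rfl⟩ : ∃ j, i = j + 1 := ⟨i - 1, by omega⟩
          rw [hβ's j]
          exact div_pos (hβ (j + 2) (by omega)) hgpos
      have hmass' : (∑ i ∈ Finset.range (m + 1), β' i * (c' (i + 1) - c' i)) = 1 := by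
        rw [Finset.sum_range_succ']
        rw [Finset.sum_range_succ', Finset.sum_range_succ'] at hmass
        have htail : ∀ i ∈ Finset.range m,
            β' (i + 1) * (c' (i + 1 + 1) - c' (i + 1))
              = β (i + 1 + 1) * (c (i + 1 + 1 + 1) - c (i + 1 + 1)) := by
          intro i hi
          have him := Finset.mem_range.1 hi
          rw [hc's (i + 1), hc's i, hβ's i]
          rw [Gdiff _ _ (hcmono 1 (i + 2) (by omega) (by omega))
            (hcmono (i + 2) (i + 3) (by omega) (by omega))]
          rw [show i + 1 + 2 = i + 3 from rfl, show i + 1 + 1 + 1 = i + 3 from rfl,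
            show i + 1 + 1 = i + 2 from rfl]
          field_simp
        rw [Finset.sum_congr rfl htail]
        have hf0 : β' 0 * (c' (0 + 1) - c' 0) = β 0 * (c 1 - c 0) + β 1 * (c 2 - c 1) := by
          rw [hβ'0, hc'0, hc's 0, G_ge (c 2) hc12.le, hc0]
          linear_combination keya + (c 2 - c 1) * key1
        rw [hf0]
        linarith [hmass]
      obtain ⟨s', a', hsa', hfac'⟩ := ih (by omega) c' β' hc'0 hc'I hc'm hβ' hmass'
      rw [show m + 1 - 1 = m from rfl] at hfac'
      classical
      set S : ℕ → ℝ := fun k => if k = 0 then c 1 else s' (k - 1) with hSdef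
      set A : ℕ → ℝ := fun k => if k = 0 then a0 else a' (k - 1) with hAdef
      have hS0 : S 0 = c 1 := by simp [hSdef]
      have hA0 : A 0 = a0 := by simp [hAdef]
      have hSs : ∀ k : ℕ, S (k + 1) = s' k := by
        intro k; simp only [hSdef]
        rw [if_neg (Nat.succ_ne_zero k), Nat.add_sub_cancel]
      have hAs : ∀ k : ℕ, A (k + 1) = a' k := by
        intro k; simp only [hAdef]
        rw [if_neg (Nat.succ_ne_zero k), Nat.add_sub_cancel]
      refine ⟨S, A, ?_, ?_⟩
      · intro k hk
        rcases Nat.eq_zero_or_pos k with rfl | hk'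
        · rw [hS0, hA0]; exact ⟨hs0, ha0⟩
        · obtain ⟨j, rfl⟩ : ∃ j, k = j + 1 := ⟨k - 1, by omega⟩
          rw [hSs, hAs]
          exact hsa' j (by omega)
      · intro x hx
        have hx0 : (0:ℝ) ≤ x := hx.1
        have hGx : G x ∈ Icc (0:ℝ) 1 :=
          ⟨by rw [← G0]; exact hGmono.monotone hx.1, by rw [← G1]; exact hGmono.monotone hx.2⟩
        show compFrom (fun k => tl (S k) (A k)) 0 (m + 1) x = phi (m + 2) c β x
        rw [compFrom_succ_left, compFrom_shift]
        have hfam : (fun k => (fun k : ℕ => tl (S k) (A k)) (k + 1))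
            = fun k => tl (s' k) (a' k) := by
          funext k; simp only []
          rw [hSs, hAs]
        rw [hfam]
        simp only [Function.comp_apply]
        have hG0x : tl (S 0) (A 0) x = G x := by rw [hS0, hA0, hGdef]
        rw [hG0x, hfac' (G x) hGx]
        -- now: phi (m+1) c' β' (G x) = phi (m+2) c β x
        have hmin : ∀ u v : ℝ, min (G u) (G v) = G (min u v) :=
          fun u v => (hGmono.monotone.map_min).symm
        have L := Finset.sum_range_succ'
          (fun i => β' i * (min (G x) (c' (i + 1)) - min (G x) (c' i))) m
        have R1 := Finset.sum_range_succ'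
          (fun i => β i * (min x (c (i + 1)) - min x (c i))) (m + 1)
        have R2 := Finset.sum_range_succ'
          (fun i => β (i + 1) * (min x (c (i + 1 + 1)) - min x (c (i + 1)))) m
        have key0 : ∀ t : ℝ, D * G t = β 0 * min t (c 1) + β 1 * (t - min t (c 1)) := by
          intro t
          rcases le_total t (c 1) with h | h
          · have hGt : G t = a0 / c 1 * t := by
              rw [hGdef]; unfold tl; rw [if_pos h]
            rw [hGt, min_eq_left h]
            have hda : D * (a0 / c 1) = β 0 := by
              rw [ha0def]
              field_simp
            calc D * (a0 / c 1 * t) = D * (a0 / c 1) * t := by ring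
              _ = β 0 * t := by rw [hda]
              _ = β 0 * t + β 1 * (t - t) := by ring
          · rw [G_ge t h, min_eq_right h]
            linear_combination keya + (t - c 1) * key1
        have t0 : β' 0 * (min (G x) (c' (0 + 1)) - min (G x) (c' 0))
            = β 0 * (min x (c 1) - min x (c 0)) + β 1 * (min x (c 2) - min x (c 1)) := by
          rw [hβ'0, hc'0, hc's 0]
          simp only [Nat.reduceAdd]
          rw [min_eq_right (by rw [← G0]; exact hGmono.monotone hx0 : (0:ℝ) ≤ G x)]
          rw [hmin x (c 2)]
          have hmt : min (min x (c 2)) (c 1) = min x (c 1) := by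
            rw [min_assoc, min_eq_right hc12.le]
          have hk := key0 (min x (c 2))
          rw [hmt] at hk
          rw [hc0, min_eq_right hx0]
          linarith [hk]
        have htail : ∀ i ∈ Finset.range m,
            β' (i + 1) * (min (G x) (c' (i + 1 + 1)) - min (G x) (c' (i + 1)))
              = β (i + 1 + 1) * (min x (c (i + 1 + 1 + 1)) - min x (c (i + 1 + 1))) := by
          intro i hi
          have him := Finset.mem_range.1 hi
          rw [hβ's i, hc's (i + 1), hc's i, hmin, hmin,
            show i + 1 + 2 = i + 3 from rfl, show i + 1 + 1 + 1 = i + 3 from rfl,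
            show i + 1 + 1 = i + 2 from rfl]
          rcases le_total x (c (i + 2)) with h | h
          · rw [min_eq_left h,
              min_eq_left (h.trans (hcmono (i + 2) (i + 3) (by omega) (by omega)))]
            ring
          · have hv : min x (c (i + 2)) = c (i + 2) := min_eq_right h
            have hvu : c (i + 2) ≤ min x (c (i + 3)) :=
              le_min h (hcmono (i + 2) (i + 3) (by omega) (by omega))
            rw [hv, Gdiff _ _ (hcmono 1 (i + 2) (by omega) (by omega)) hvu]
            field_simp
        rw [phi, phi, L, R1, R2, Finset.sum_congr rfl htail]
        simp only [Nat.reduceAdd] at t0 ⊢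
        linarith [t0]

set_option maxHeartbeats 1000000 in
lemma vol_inter (p q ci ci1 : ℝ) (hpq : p ≤ q) (hc : ci ≤ ci1) :
    volume (Ioc ci ci1 ∩ Ioc p q)
      = ENNReal.ofReal ((min q ci1 - min q ci) - (min p ci1 - min p ci)) := by
  rw [Ioc_inter_Ioc, Real.volume_Ioc]
  rw [← ofReal_max0 (ci1 ⊓ q - ci ⊔ p),
    ← ofReal_max0 ((min q ci1 - min q ci) - (min p ci1 - min p ci))]
  congr 1
  simp only [min_def, max_def]
  split_ifs <;> linarith

lemma compFrom_good (s a : ℕ → ℝ) (n : ℕ)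
    (h : ∀ k < n, s k ∈ Ioo (0:ℝ) 1 ∧ a k ∈ Ioo (0:ℝ) 1) :
    StrictMono (compFrom (fun k => tl (s k) (a k)) 0 n) ∧
    Function.Surjective (compFrom (fun k => tl (s k) (a k)) 0 n) ∧
    compFrom (fun k => tl (s k) (a k)) 0 n 0 = 0 ∧
    compFrom (fun k => tl (s k) (a k)) 0 n 1 = 1 := by
  induction n with
  | zero => exact ⟨strictMono_id, Function.surjective_id, rfl, rfl⟩
  | succ n ihn =>
    obtain ⟨h1, h2, h3, h4⟩ := ihn (fun k hk => h k (by omega))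
    obtain ⟨hsk, hak⟩ := h n (by omega)
    have e1 : compFrom (fun k => tl (s k) (a k)) 0 (n + 1)
        = tl (s (0 + n)) (a (0 + n)) ∘ compFrom (fun k => tl (s k) (a k)) 0 n := rfl
    rw [e1, Nat.zero_add]
    refine ⟨(tl_strictMono hsk hak).comp h1, (tl_surj hsk hak).comp h2, ?_, ?_⟩
    · show tl (s n) (a n) (compFrom _ 0 n 0) = 0
      rw [h3, tl_zero hsk]
    · show tl (s n) (a n) (compFrom _ 0 n 1) = 1
      rw [h4, tl_one hsk]

lemma phi_of_nonpos {I : ℕ} {c β : ℕ → ℝ} (hc0 : c 0 = 0)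
    (hcm : ∀ i < I, c i < c (i + 1)) {x : ℝ} (hx : x ≤ 0) : phi I c β x = 0 := by
  rw [phi]
  refine Finset.sum_eq_zero fun i hi => ?_
  have hi' := Finset.mem_range.1 hi
  have h1 : (0:ℝ) ≤ c i := hc0 ▸ c_mono hcm (Nat.zero_le i) (by omega)
  have h2 : (0:ℝ) ≤ c (i + 1) := hc0 ▸ c_mono hcm (Nat.zero_le (i + 1)) (by omega)
  rw [min_eq_left (hx.trans h1), min_eq_left (hx.trans h2)]
  ring

lemma phi_of_ge_one {I : ℕ} {c β : ℕ → ℝ} (hcI : c I = 1)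
    (hcm : ∀ i < I, c i < c (i + 1)) {x : ℝ} (hx : 1 ≤ x) :
    phi I c β x = ∑ i ∈ Finset.range I, β i * (c (i + 1) - c i) := by
  rw [phi]
  refine Finset.sum_congr rfl fun i hi => ?_
  have hi' := Finset.mem_range.1 hi
  have h1 : c i ≤ 1 := hcI ▸ c_mono hcm (by omega) (le_refl I)
  have h2 : c (i + 1) ≤ 1 := hcI ▸ c_mono hcm (by omega) (le_refl I)
  rw [min_eq_right (h1.trans hx), min_eq_right (h2.trans hx)]

lemma lam_mono {p q ci ci1 : ℝ} (hpq : p ≤ q) (hc : ci ≤ ci1) :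
    min p ci1 - min p ci ≤ min q ci1 - min q ci := by
  simp only [min_def]
  split_ifs <;> linarith

set_option maxHeartbeats 2000000 in
/-- Let `F` be a probability measure on `(0,1]` with piecewise constant
density `f = ∑_{i<I} β i · 1_{(c i, c (i+1)]}`, with `β i > 0` and
`0 = c 0 < c 1 < ⋯ < c I = 1`.  Then there exist `I − 1` two-leaf tree measures — each
determined by a split point `s k ∈ (0,1)` and a left mass `a k ∈ (0,1)`, with piecewise
affine CDF of slopes `a k / s k` on `(0, s k]` and `(1 − a k)/(1 − s k)` on `(s k, 1]` —
such that the pushforward of `F` under the composition `𝐆_{I−1} ∘ ⋯ ∘ 𝐆₁` of their CDFs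
is the uniform distribution on `(0,1]`. -/
theorem stmt15
    (I : ℕ) (c : ℕ → ℝ) (β : ℕ → ℝ)
    (hc0 : c 0 = 0) (hcI : c I = 1) (hcmono : ∀ i < I, c i < c (i + 1))
    (hβ : ∀ i < I, 0 < β i)
    (F : Measure ℝ) [IsProbabilityMeasure F]
    (hF : F = volume.withDensity fun x =>
      ∑ i ∈ Finset.range I,
        Set.indicator (Ioc (c i) (c (i + 1))) (fun _ => ENNReal.ofReal (β i)) x) :
    ∃ s a : ℕ → ℝ,
      (∀ k < I - 1, s k ∈ Ioo (0:ℝ) 1 ∧ a k ∈ Ioo (0:ℝ) 1) ∧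
      Measure.map
        (compFrom
          (fun k x => if x ≤ s k then a k / s k * x
            else a k + (1 - a k) / (1 - s k) * (x - s k))
          0 (I - 1)) F
        = volume.restrict (Ioc (0:ℝ) 1) := by
  classical
  have Fapply : ∀ S : Set ℝ, MeasurableSet S →
      F S = ∑ i ∈ Finset.range I, ENNReal.ofReal (β i) * volume (Ioc (c i) (c (i + 1)) ∩ S) := by
    intro S hS
    rw [hF, withDensity_apply _ hS, lintegral_finset_sum _ (fun i _ =>
      (measurable_const.indicator measurableSet_Ioc))]
    refine Finset.sum_congr rfl fun i _ => ?_
    rw [lintegral_indicator_const measurableSet_Ioc, Measure.restrict_apply measurableSet_Ioc]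
  have hmass : (∑ i ∈ Finset.range I, β i * (c (i + 1) - c i)) = 1 := by
    have h1 : F univ = 1 := measure_univ
    rw [Fapply univ MeasurableSet.univ] at h1
    simp only [inter_univ, Real.volume_Ioc] at h1
    have h2 : ∀ i ∈ Finset.range I,
        ENNReal.ofReal (β i) * ENNReal.ofReal (c (i + 1) - c i)
          = ENNReal.ofReal (β i * (c (i + 1) - c i)) := fun i hi =>
      (ENNReal.ofReal_mul (hβ i (Finset.mem_range.1 hi)).le).symm
    rw [Finset.sum_congr rfl h2, ← ENNReal.ofReal_sum_of_nonneg (fun i hi =>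
      mul_nonneg (hβ i (Finset.mem_range.1 hi)).le
        (sub_nonneg.2 (hcmono i (Finset.mem_range.1 hi)).le))] at h1
    exact ENNReal.ofReal_eq_one.1 h1
  have hI1 : 1 ≤ I := by
    rcases Nat.eq_zero_or_pos I with rfl | h
    · rw [hc0] at hcI; norm_num at hcI
    · exact h
  obtain ⟨s, a, hsa, hfac⟩ := factor I hI1 c β hc0 hcI hcmono hβ hmass
  refine ⟨s, a, hsa, ?_⟩
  show Measure.map (compFrom (fun k => tl (s k) (a k)) 0 (I - 1)) F
      = volume.restrict (Ioc (0:ℝ) 1)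
  obtain ⟨hmono, hsurj, h0, h1⟩ := compFrom_good s a (I - 1) hsa
  set h : ℝ → ℝ := compFrom (fun k => tl (s k) (a k)) 0 (I - 1) with hhdef
  have hmeas : Measurable h := hmono.monotone.measurable
  set e : ℝ ≃o ℝ := StrictMono.orderIsoOfSurjective h hmono hsurj with hedef
  have hclamp : ∀ t : ℝ, phi I c β (e.symm t) = max 0 (min t 1) := by
    intro t
    have hyt : h (e.symm t) = t := e.apply_symm_apply t
    rcases le_or_gt (e.symm t) 0 with hy | hy
    · rw [phi_of_nonpos hc0 hcmono hy]
      have ht : t ≤ 0 := by rw [← hyt, ← h0]; exact hmono.monotone hy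
      rw [min_eq_left (ht.trans zero_le_one), max_eq_left ht]
    · rcases le_or_gt (e.symm t) 1 with hy1 | hy1
      · rw [← hfac _ ⟨hy.le, hy1⟩, hyt]
        have ht0 : 0 ≤ t := by rw [← hyt, ← h0]; exact hmono.monotone hy.le
        have ht1 : t ≤ 1 := by rw [← hyt, ← h1]; exact hmono.monotone hy1
        rw [min_eq_left ht1, max_eq_right ht0]
      · rw [phi_of_ge_one hcI hcmono hy1.le, hmass]
        have ht : 1 ≤ t := by rw [← hyt, ← h1]; exact hmono.monotone hy1.le
        rw [min_eq_right ht, max_eq_right zero_le_one]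
  have FIoc : ∀ p q : ℝ, p ≤ q →
      F (Ioc p q) = ENNReal.ofReal (phi I c β q - phi I c β p) := by
    intro p q hpq
    rw [Fapply _ measurableSet_Ioc]
    have h2 : ∀ i ∈ Finset.range I,
        ENNReal.ofReal (β i) * volume (Ioc (c i) (c (i + 1)) ∩ Ioc p q)
          = ENNReal.ofReal (β i *
              ((min q (c (i + 1)) - min q (c i)) - (min p (c (i + 1)) - min p (c i)))) := by
      intro i hi
      rw [vol_inter p q (c i) (c (i + 1)) hpq (hcmono i (Finset.mem_range.1 hi)).le,
        ← ENNReal.ofReal_mul (hβ i (Finset.mem_range.1 hi)).le]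
    rw [Finset.sum_congr rfl h2, ← ENNReal.ofReal_sum_of_nonneg (fun i hi =>
      mul_nonneg (hβ i (Finset.mem_range.1 hi)).le
        (sub_nonneg.2 (lam_mono hpq (hcmono i (Finset.mem_range.1 hi)).le)))]
    congr 1
    rw [phi, phi, ← Finset.sum_sub_distrib]
    exact Finset.sum_congr rfl fun i _ => by ring
  haveI : IsFiniteMeasure (F.map h) := Measure.isFiniteMeasure_map F h
  refine Measure.ext_of_Ioc _ _ fun u v huv => ?_
  rw [Measure.map_apply hmeas measurableSet_Ioc]
  have hpre : h ⁻¹' Ioc u v = Ioc (e.symm u) (e.symm v) := e.preimage_Ioc u v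
  rw [hpre, FIoc _ _ (e.symm.monotone huv.le), hclamp, hclamp,
    Measure.restrict_apply measurableSet_Ioc, Ioc_inter_Ioc, Real.volume_Ioc]
  rw [← ofReal_max0 (max 0 (min v 1) - max 0 (min u 1)), ← ofReal_max0 (v ⊓ 1 - u ⊔ 0)]
  congr 1
  simp only [min_def, max_def]
  split_ifs <;> linarith
end

section
/- Let 𝐆 be a piecewise affine strictly increasing bijection of (0,1] that is the CDF of a two-leaf tree measure G with split point c₁ and left mass α, and let F be a probability measure with piecewise constant density f = ∑_{i=1}^I β_i 1_{(c_{i−1},c_i]}. If α satisfies (1−α)/α = (β₂/β₁)·(1−c₁)/c₁, then the pushforward 𝐆#F has density g(x) = (c₁/α)β₁ on (0, 𝐆(c₂)], and (so the first two pieces merge into one constant piece), and g is piecewise constant with I−1 pieces on the partition points 𝐆(c₂) < ⋯ < 𝐆(c_{I−1}) < 1. -/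
open MeasureTheory Set

lemma map_affine_volume (m k : ℝ) (hm : 0 < m) :
    Measure.map (fun x => m * x + k) (volume : Measure ℝ)
      = ENNReal.ofReal m⁻¹ • volume := by
  have h1 : (fun x : ℝ => m * x + k) = (fun x : ℝ => x + k) ∘ (fun x : ℝ => m * x) := rfl
  rw [h1, ← Measure.map_map (by fun_prop) (by fun_prop),
    Real.map_volume_mul_left hm.ne', Measure.map_smul,
    map_add_right_eq_self volume k, abs_inv, abs_of_pos hm]

lemma preimage_affine_Ioc (m k a b : ℝ) (hm : 0 < m) :
    (fun x => m * x + k) ⁻¹' Ioc (m * a + k) (m * b + k) = Ioc a b := by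
  ext x
  simp [Set.mem_Ioc, mul_lt_mul_iff_right₀ hm, mul_le_mul_iff_right₀ hm]

lemma map_affine_restrict (m k a b : ℝ) (hm : 0 < m) :
    Measure.map (fun x => m * x + k) (volume.restrict (Ioc a b))
      = ENNReal.ofReal m⁻¹ • volume.restrict (Ioc (m * a + k) (m * b + k)) := by
  have hmeas : Measurable fun x : ℝ => m * x + k := by fun_prop
  rw [← preimage_affine_Ioc m k a b hm, ← Measure.restrict_map hmeas measurableSet_Ioc,
    map_affine_volume m k hm, Measure.restrict_smul]

lemma withDensity_finsum {ι : Type*} (s : Finset ι) (f : ι → Set ℝ)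
    (hmeas : ∀ i, MeasurableSet (f i)) (g : ι → ENNReal) :
    (volume : Measure ℝ).withDensity
        (fun x => ∑ i ∈ s, (f i).indicator (fun _ => g i) x)
      = ∑ i ∈ s, g i • volume.restrict (f i) := by
  classical
  induction s using Finset.induction_on with
  | empty => simp
  | @insert a s ha ih =>
    simp only [Finset.sum_insert ha]
    rw [show (fun x => (f a).indicator (fun _ => g a) x +
          ∑ i ∈ s, (f i).indicator (fun _ => g i) x)
        = ((f a).indicator (fun _ => g a)) +
          (fun x => ∑ i ∈ s, (f i).indicator (fun _ => g i) x) from rfl,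
      withDensity_add_left (Measurable.indicator measurable_const (hmeas a)),
      withDensity_indicator (hmeas a), withDensity_const, ih]

lemma map_finsum' {ι : Type*} (f : ℝ → ℝ) (hf : Measurable f) (s : Finset ι)
    (μ : ι → Measure ℝ) :
    Measure.map f (∑ i ∈ s, μ i) = ∑ i ∈ s, Measure.map f (μ i) := by
  classical
  induction s using Finset.induction_on with
  | empty => simp
  | @insert a s ha ih =>
    rw [Finset.sum_insert ha, Measure.map_add _ _ hf, ih, Finset.sum_insert ha]

/-- Let `Gf` be the piecewise affine strictly increasing CDF of a two-leaf
tree measure on `(0,1]` with split point `c 1` and left mass `α`, and let `F` have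
piecewise constant density `∑_{i<I} β i · 1_{(c i, c (i+1)]}` (with
`0 = c 0 < c 1 < ⋯ < c I = 1`, `β i > 0`).  If `(1−α)/α = (β 1/β 0)·(1 − c 1)/(c 1)`,
then the pushforward `Gf#F` has density `(c 1/α)·β 0` on `(0, Gf (c 2)]` (the first two
pieces merge) and is piecewise constant with `I − 1` pieces, taking the value
`((1 − c 1)/(1 − α))·β i` on `(Gf (c i), Gf (c (i+1))]` for `i = 2, …, I−1`. -/
theorem stmt16
    (I : ℕ) (hI : 2 ≤ I) (c : ℕ → ℝ) (β : ℕ → ℝ) (α : ℝ)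
    (hc0 : c 0 = 0) (hcI : c I = 1) (hcmono : ∀ i < I, c i < c (i + 1))
    (hβ : ∀ i < I, 0 < β i) (hα : α ∈ Ioo (0:ℝ) 1)
    (hαeq : (1 - α) / α = β 1 / β 0 * ((1 - c 1) / c 1))
    (Gf : ℝ → ℝ)
    (hGf : ∀ x, Gf x = if x ≤ c 1 then α / c 1 * x
      else α + (1 - α) / (1 - c 1) * (x - c 1))
    (F : Measure ℝ) [IsProbabilityMeasure F]
    (hF : F = volume.withDensity fun x =>
      ∑ i ∈ Finset.range I,
        Set.indicator (Ioc (c i) (c (i + 1))) (fun _ => ENNReal.ofReal (β i)) x) :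
    Measure.map Gf F = volume.withDensity fun y =>
      Set.indicator (Ioc (0:ℝ) (Gf (c 2)))
          (fun _ => ENNReal.ofReal (c 1 / α * β 0)) y +
        ∑ i ∈ Finset.Ico 2 I,
          Set.indicator (Ioc (Gf (c i)) (Gf (c (i + 1))))
            (fun _ => ENNReal.ofReal ((1 - c 1) / (1 - α) * β i)) y := by
  obtain ⟨hα0, hα1⟩ := hα
  have hc1pos : 0 < c 1 := by
    have := hcmono 0 (by omega); rw [hc0] at this; exact this
  have hmono : ∀ j, j ≤ I → ∀ i, i ≤ j → c i ≤ c j := by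
    intro j
    induction j with
    | zero =>
      intro _ i hi
      obtain rfl : i = 0 := Nat.le_zero.mp hi
      exact le_rfl
    | succ n ih =>
      intro hj i hi
      rcases Nat.lt_succ_iff_lt_or_eq.mp (Nat.lt_succ_of_le hi) with h | h
      · exact le_trans (ih (by omega) i (by omega)) (hcmono n (by omega)).le
      · rw [h]
  have h12 : c 1 < c 2 := hcmono 1 (by omega)
  have hc1lt1 : c 1 < 1 := by
    have h2I : c 2 ≤ c I := hmono I le_rfl 2 hI
    rw [hcI] at h2I; linarith
  set m1 := α / c 1 with hm1
  set m2 := (1 - α) / (1 - c 1) with hm2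
  set k2 := α - m2 * c 1 with hk2
  have hm1pos : 0 < m1 := div_pos hα0 hc1pos
  have hm2pos : 0 < m2 := div_pos (by linarith) (by linarith)
  have hGf' : ∀ x, Gf x = if x ≤ c 1 then m1 * x + 0 else m2 * x + k2 := by
    intro x; rw [hGf]; split <;> ring
  have hGm : Measurable Gf := by
    have hfe : Gf = fun x => if x ≤ c 1 then m1 * x + 0 else m2 * x + k2 := funext hGf'
    rw [hfe]
    exact Measurable.ite (measurableSet_le measurable_id measurable_const)
      (by fun_prop) (by fun_prop)
  have hGc1v : m1 * c 1 + 0 = α := by rw [hm1]; field_simp; simp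
  have hGfi : ∀ i, 1 ≤ i → i ≤ I → Gf (c i) = m2 * c i + k2 := by
    intro i h1 h2
    rcases eq_or_lt_of_le h1 with h | h
    · rw [← h, hGf' (c 1), if_pos le_rfl, hGc1v, hk2]; ring
    · have hci : c 1 < c i := lt_of_lt_of_le h12 (hmono i h2 2 h)
      rw [hGf' (c i), if_neg (not_le.mpr hci)]
  -- decompose F
  have hFsum : F = ∑ i ∈ Finset.range I,
      ENNReal.ofReal (β i) • volume.restrict (Ioc (c i) (c (i + 1))) := by
    rw [hF, withDensity_finsum _ _ (fun i => measurableSet_Ioc)]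
  -- generic mapped piece
  have key : ∀ (m k a b βv : ℝ), 0 < m → 0 ≤ βv →
      (∀ x ∈ Ioc a b, Gf x = m * x + k) →
      Measure.map Gf (ENNReal.ofReal βv • volume.restrict (Ioc a b))
        = ENNReal.ofReal (βv * m⁻¹) • volume.restrict (Ioc (m * a + k) (m * b + k)) := by
    intro m k a b βv hm hβv hagree
    rw [Measure.map_smul,
      Measure.map_congr ((ae_restrict_iff' measurableSet_Ioc).2 (ae_of_all _ hagree)),
      map_affine_restrict m k a b hm, smul_smul, ← ENNReal.ofReal_mul hβv]
  -- mapped pieces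
  have piece0 : Measure.map Gf (ENNReal.ofReal (β 0) • volume.restrict (Ioc (c 0) (c 1)))
      = ENNReal.ofReal (β 0 * m1⁻¹) • volume.restrict (Ioc 0 α) := by
    rw [key m1 0 (c 0) (c 1) (β 0) hm1pos (hβ 0 (by omega)).le
      (fun x hx => by rw [hGf' x, if_pos hx.2])]
    rw [hGc1v, hc0, mul_zero, zero_add]
  have piece1 : Measure.map Gf (ENNReal.ofReal (β 1) • volume.restrict (Ioc (c 1) (c 2)))
      = ENNReal.ofReal (β 1 * m2⁻¹) • volume.restrict (Ioc α (Gf (c 2))) := by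
    rw [key m2 k2 (c 1) (c 2) (β 1) hm2pos (hβ 1 (by omega)).le
      (fun x hx => by rw [hGf' x, if_neg (not_le.mpr hx.1)])]
    rw [← hGfi 2 (by omega) hI]
    congr 2
    rw [hk2]; ring
  have piecei : ∀ i ∈ Finset.Ico 2 I,
      Measure.map Gf (ENNReal.ofReal (β i) • volume.restrict (Ioc (c i) (c (i + 1))))
        = ENNReal.ofReal (β i * m2⁻¹) • volume.restrict (Ioc (Gf (c i)) (Gf (c (i + 1)))) := by
    intro i hi
    rw [Finset.mem_Ico] at hi
    have hc1i : c 1 ≤ c i := le_trans h12.le (hmono i hi.2.le 2 hi.1)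
    rw [key m2 k2 (c i) (c (i + 1)) (β i) hm2pos (hβ i hi.2).le
      (fun x hx => by rw [hGf' x, if_neg (not_le.mpr (lt_of_le_of_lt hc1i hx.1))]),
      ← hGfi i (by omega) hi.2.le, ← hGfi (i + 1) (by omega) (by omega)]
  -- scalar identities
  have e0 : β 0 * m1⁻¹ = c 1 / α * β 0 := by
    rw [hm1]; field_simp
  have e1 : β 1 * m2⁻¹ = c 1 / α * β 0 := by
    have hβ0 : 0 < β 0 := hβ 0 (by omega)
    have h := hαeq
    field_simp at h
    rw [hm2, inv_div, ← mul_div_assoc, div_mul_eq_mul_div,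
      div_eq_div_iff (by linarith : (1:ℝ) - α ≠ 0) hα0.ne']
    linear_combination -h
  have e2 : ∀ i, β i * m2⁻¹ = (1 - c 1) / (1 - α) * β i := by
    intro i; rw [hm2]; field_simp
  -- α ≤ Gf (c 2)
  have hαle : α ≤ Gf (c 2) := by
    rw [hGfi 2 (by omega) hI, hk2]
    nlinarith
  -- assemble LHS
  rw [hFsum, map_finsum' Gf hGm]
  rw [Finset.range_eq_Ico, ← Finset.sum_Ico_consecutive _ (Nat.zero_le 2) hI]
  have h02 : (Finset.Ico 0 2 : Finset ℕ) = {0, 1} := by decide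
  rw [h02, Finset.sum_insert (by decide), Finset.sum_singleton, piece0, piece1,
    Finset.sum_congr rfl piecei]
  -- assemble RHS
  have hRHS : (volume : Measure ℝ).withDensity (fun y =>
      Set.indicator (Ioc (0:ℝ) (Gf (c 2))) (fun _ => ENNReal.ofReal (c 1 / α * β 0)) y +
        ∑ i ∈ Finset.Ico 2 I,
          Set.indicator (Ioc (Gf (c i)) (Gf (c (i + 1))))
            (fun _ => ENNReal.ofReal ((1 - c 1) / (1 - α) * β i)) y)
      = ENNReal.ofReal (c 1 / α * β 0) • volume.restrict (Ioc (0:ℝ) (Gf (c 2))) +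
        ∑ i ∈ Finset.Ico 2 I, ENNReal.ofReal ((1 - c 1) / (1 - α) * β i) •
          volume.restrict (Ioc (Gf (c i)) (Gf (c (i + 1)))) := by
    rw [show (fun y => Set.indicator (Ioc (0:ℝ) (Gf (c 2)))
          (fun _ => ENNReal.ofReal (c 1 / α * β 0)) y +
        ∑ i ∈ Finset.Ico 2 I, Set.indicator (Ioc (Gf (c i)) (Gf (c (i + 1))))
            (fun _ => ENNReal.ofReal ((1 - c 1) / (1 - α) * β i)) y)
      = (fun y => Set.indicator (Ioc (0:ℝ) (Gf (c 2)))
          (fun _ => ENNReal.ofReal (c 1 / α * β 0)) y) +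
        (fun y => ∑ i ∈ Finset.Ico 2 I, Set.indicator (Ioc (Gf (c i)) (Gf (c (i + 1))))
            (fun _ => ENNReal.ofReal ((1 - c 1) / (1 - α) * β i)) y) from rfl,
      withDensity_add_left (Measurable.indicator measurable_const measurableSet_Ioc),
      withDensity_indicator measurableSet_Ioc, withDensity_const,
      withDensity_finsum _ _ (fun i => measurableSet_Ioc)]
  rw [hRHS]
  -- split first interval
  rw [← Set.Ioc_union_Ioc_eq_Ioc hα0.le hαle,
    Measure.restrict_union (Set.Ioc_disjoint_Ioc_of_le le_rfl) measurableSet_Ioc, smul_add]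
  rw [e0, e1]
  congr 1
  refine Finset.sum_congr rfl fun i hi => ?_
  rw [e2 i]
end

section
/- Let F* be a probability measure on (0,1]^d with a uniformly continuous density f*. Then for every ε > 0, there exists a probability measure G with piecewise constant density on a finite partition of (0,1]^d into axis-aligned rectangles, with strictly positive density pieces, such that KL(F* ‖ G) < ε. -/
open MeasureTheory Set

lemma aux_cover (N : ℕ) (hN : 0 < N) {t : ℝ} (ht : t ∈ Ioc (0:ℝ) 1) :
    ∃ k : Fin N, t ∈ Ioc ((k.val : ℝ)/N) (((k.val : ℝ) + 1)/N) := by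
  have hNR : (0:ℝ) < N := Nat.cast_pos.mpr hN
  have h1 : 0 < t * N := mul_pos ht.1 hNR
  have h2 : t * N ≤ N := by nlinarith [ht.2]
  have hc1 : (0:ℤ) < ⌈t * N⌉ := Int.ceil_pos.mpr h1
  have hcN : ⌈t * N⌉ ≤ (N:ℤ) := Int.ceil_le.mpr (by exact_mod_cast h2)
  set K : ℤ := ⌈t * N⌉ - 1 with hK
  have hK0 : 0 ≤ K := by omega
  have hlt : K.toNat < N := by omega
  have hKR : ((K.toNat : ℕ) : ℝ) = (K : ℝ) := by
    exact_mod_cast congrArg (fun z : ℤ => (z : ℝ)) (Int.toNat_of_nonneg hK0)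
  refine ⟨⟨K.toNat, hlt⟩, ?_, ?_⟩
  · rw [div_lt_iff₀ hNR]
    have h3 : ((⌈t * N⌉ : ℤ) : ℝ) < t * N + 1 := Int.ceil_lt_add_one (t * N)
    simp only [Fin.val_mk]; rw [hKR, hK]
    push_cast
    linarith
  · rw [le_div_iff₀ hNR]
    have h4 : t * N ≤ ((⌈t * N⌉ : ℤ) : ℝ) := Int.le_ceil (t * N)
    simp only [Fin.val_mk]; rw [hKR, hK]
    push_cast
    linarith

lemma aux_disj (N : ℕ) (hN : (0:ℝ) < N) {a b : ℕ} (hab : a ≠ b) :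
    Disjoint (Ioc ((a:ℝ)/N) (((a:ℝ)+1)/N)) (Ioc ((b:ℝ)/N) (((b:ℝ)+1)/N)) := by
  rw [Set.Ioc_disjoint_Ioc]
  rcases lt_or_gt_of_ne hab with h | h
  · have h1 : (a:ℝ) + 1 ≤ (b:ℝ) := by exact_mod_cast h
    have : ((a:ℝ)+1)/N ≤ (b:ℝ)/N := by gcongr
    calc min (((a:ℝ)+1)/N) (((b:ℝ)+1)/N) ≤ ((a:ℝ)+1)/N := min_le_left _ _
      _ ≤ (b:ℝ)/N := this
      _ ≤ max ((a:ℝ)/N) ((b:ℝ)/N) := le_max_right _ _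
  · have h1 : (b:ℝ) + 1 ≤ (a:ℝ) := by exact_mod_cast h
    have : ((b:ℝ)+1)/N ≤ (a:ℝ)/N := by gcongr
    calc min (((a:ℝ)+1)/N) (((b:ℝ)+1)/N) ≤ ((b:ℝ)+1)/N := min_le_right _ _
      _ ≤ (a:ℝ)/N := this
      _ ≤ max ((a:ℝ)/N) ((b:ℝ)/N) := le_max_left _ _

/-- Let `F*` be a probability measure on `(0,1]^d` with a uniformly
continuous density `f`.  Then for every `ε > 0` there is a probability measure `G` whose
density is piecewise constant, with strictly positive values, on a finite partition of
`(0,1]^d` into axis-aligned rectangles, such that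
`KL(F*‖G) = ∫ f log(f/g) dμ < ε`. -/
theorem stmt17
    (d : ℕ) (U : Set (Fin d → ℝ)) (hU : U = Set.univ.pi fun _ => Ioc (0:ℝ) 1)
    (f : (Fin d → ℝ) → ℝ) (Fstar : Measure (Fin d → ℝ)) [IsProbabilityMeasure Fstar]
    (hfm : Measurable f) (hf0 : ∀ x ∈ U, 0 ≤ f x)
    (hF : Fstar = (volume.restrict U).withDensity fun x => ENNReal.ofReal (f x))
    (hfc : UniformContinuousOn f U) :
    ∀ ε > 0, ∃ (n : ℕ) (lo hi : Fin n → Fin d → ℝ) (v : Fin n → ℝ),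
      (∀ i, 0 < v i) ∧
      (∀ i i', i ≠ i' →
        Disjoint (Set.univ.pi fun j => Ioc (lo i j) (hi i j))
          (Set.univ.pi fun j => Ioc (lo i' j) (hi i' j))) ∧
      (⋃ i, Set.univ.pi fun j => Ioc (lo i j) (hi i j)) = U ∧
      IsProbabilityMeasure
        ((volume.restrict U).withDensity fun x => ENNReal.ofReal
          (∑ i, Set.indicator (Set.univ.pi fun j => Ioc (lo i j) (hi i j))
            (fun _ => v i) x)) ∧
      (∫ x in U, f x * Real.log (f x /
          ∑ i, Set.indicator (Set.univ.pi fun j => Ioc (lo i j) (hi i j))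
            (fun _ => v i) x)) < ε := by
  intro ε hε
  have hUm : MeasurableSet U := by
    rw [hU]; exact MeasurableSet.univ_pi fun _ => measurableSet_Ioc
  have hU1 : volume U = 1 := by
    rw [hU, volume_pi_pi]
    simp [Real.volume_Ioc]
  -- total mass of f is 1
  have h1 : ∫⁻ x in U, ENNReal.ofReal (f x) ∂volume = 1 := by
    have := measure_univ (μ := Fstar)
    rw [hF, withDensity_apply _ MeasurableSet.univ, setLIntegral_univ] at this
    exact this
  set δ : ℝ := ε / 4 with hδdef
  have hδ : 0 < δ := by positivity
  obtain ⟨η, hη, hcont⟩ := Metric.uniformContinuousOn_iff.mp hfc δ hδ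
  obtain ⟨N, hN⟩ := exists_nat_gt (1/η)
  have hN0 : 0 < N := by
    by_contra h
    push_neg at h
    interval_cases N
    simp at hN
    exact absurd hN (not_lt.mpr (le_of_lt (by positivity)))
  have hNR : (0:ℝ) < N := Nat.cast_pos.mpr hN0
  have hmesh : 1/(N:ℝ) < η := by
    rw [div_lt_iff₀ hNR]
    rw [div_lt_iff₀ hη] at hN
    nlinarith
  set n : ℕ := N ^ d with hn
  have hnpos : 0 < n := pow_pos hN0 d
  haveI : Nonempty (Fin n) := ⟨⟨0, hnpos⟩⟩
  set e : Fin n → (Fin d → Fin N) := fun i => finFunctionFinEquiv.symm i with he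
  set lo : Fin n → Fin d → ℝ := fun i j => ((e i j : ℕ) : ℝ) / N with hlo
  set hi : Fin n → Fin d → ℝ := fun i j => (((e i j : ℕ) : ℝ) + 1) / N with hhi
  set R : Fin n → Set (Fin d → ℝ) := fun i => Set.univ.pi fun j => Ioc (lo i j) (hi i j) with hR
  have hRm : ∀ i, MeasurableSet (R i) := fun i =>
    MeasurableSet.univ_pi fun _ => measurableSet_Ioc
  have hRU : ∀ i, R i ⊆ U := by
    intro i x hx
    rw [hU]
    intro j _
    have hxj := hx j (mem_univ j)
    have hk : (e i j : ℕ) + 1 ≤ N := (e i j).2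
    constructor
    · have : (0:ℝ) ≤ ((e i j : ℕ) : ℝ) / N := by positivity
      exact lt_of_le_of_lt this hxj.1
    · have h2 : (((e i j : ℕ) : ℝ) + 1) / N ≤ 1 := by
        rw [div_le_one hNR]
        exact_mod_cast hk
      exact le_trans hxj.2 h2
  have hlohi : ∀ i j, lo i j < hi i j := by
    intro i j
    rw [hlo, hhi]
    apply div_lt_div_of_pos_right ?_ hNR
    linarith
  have hcmem : ∀ i, hi i ∈ R i := by
    intro i j _
    exact ⟨hlohi i j, le_refl _⟩
  have hdisj : ∀ i i', i ≠ i' → Disjoint (R i) (R i') := by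
    intro i i' hii
    have hei : e i ≠ e i' := by
      intro hcontra
      exact hii (finFunctionFinEquiv.symm.injective hcontra)
    obtain ⟨j, hj⟩ := Function.ne_iff.mp hei
    rw [Set.disjoint_left]
    intro x hx hx'
    have h1 := hx j (mem_univ j)
    have h2 := hx' j (mem_univ j)
    have hd := aux_disj N hNR (a := ((e i j : ℕ))) (b := ((e i' j : ℕ)))
      (fun hcon => hj (Fin.val_injective hcon))
    exact Set.disjoint_left.mp hd h1 h2
  have hunion : (⋃ i, R i) = U := by
    apply Set.Subset.antisymm
    · exact Set.iUnion_subset hRU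
    · intro x hx
      rw [hU] at hx
      have hk : ∀ j, ∃ k : Fin N, x j ∈ Ioc ((k.val : ℝ)/N) (((k.val : ℝ) + 1)/N) :=
        fun j => aux_cover N hN0 (hx j (mem_univ j))
      choose K hK using hk
      refine Set.mem_iUnion.mpr ⟨finFunctionFinEquiv K, ?_⟩
      intro j _
      have heK : e (finFunctionFinEquiv K) = K := Equiv.symm_apply_apply _ _
      rw [hlo, hhi]
      simp only [heK]
      exact hK j
  have hvolR : ∀ i, volume (R i) = ENNReal.ofReal ((1/(N:ℝ))^d) := by
    intro i
    rw [hR]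
    rw [volume_pi_pi]
    have hvj : ∀ j : Fin d, volume (Ioc (lo i j) (hi i j)) = ENNReal.ofReal (1/(N:ℝ)) := by
      intro j
      rw [Real.volume_Ioc, hlo, hhi]
      congr 1
      field_simp; ring
    simp only [hvj, Finset.prod_const, Finset.card_univ, Fintype.card_fin]
    rw [ENNReal.ofReal_pow (by positivity)]
  have hclose : ∀ i, ∀ x ∈ R i, |f x - f (hi i)| < δ := by
    intro i x hx
    have hxU : x ∈ U := hRU i hx
    have hcU : hi i ∈ U := hRU i (hcmem i)
    have hdist : dist x (hi i) ≤ 1/(N:ℝ) := by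
      rw [dist_pi_le_iff (by positivity)]
      intro j
      have hxj := hx j (mem_univ j)
      have h2 : hi i j - lo i j = 1/(N:ℝ) := by
        rw [hlo, hhi]; field_simp; ring
      rw [Real.dist_eq, abs_le]
      constructor
      · linarith [hxj.1, hxj.2, hlohi i j]
      · linarith [hxj.1, hxj.2]
    have hfd := hcont x hxU (hi i) hcU (lt_of_le_of_lt hdist hmesh)
    rwa [Real.dist_eq] at hfd
  have hcorner0 : ∀ i, 0 ≤ f (hi i) := fun i => hf0 _ (hRU i (hcmem i))
  set C : ℝ := ∑ i, (f (hi i) + δ) * (1/(N:ℝ))^d with hCdef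
  have hC0 : 0 < C := by
    apply Finset.sum_pos ?_ Finset.univ_nonempty
    intro i _
    have := hcorner0 i
    positivity
  set v : Fin n → ℝ := fun i => (f (hi i) + δ) / C with hv
  have hvpos : ∀ i, 0 < v i := by
    intro i
    have := hcorner0 i
    apply div_pos ?_ hC0
    linarith
  have hLint : ∀ w : Fin n → ℝ, (∀ i, 0 ≤ w i) →
      ∫⁻ x in U, ENNReal.ofReal (∑ i, (R i).indicator (fun _ => w i) x) ∂volume
        = ENNReal.ofReal (∑ i, w i * (1/(N:ℝ))^d) := by
    intro w hw
    have hpt : ∀ x, ENNReal.ofReal (∑ i, (R i).indicator (fun _ => w i) x)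
        = ∑ i, (R i).indicator (fun _ => ENNReal.ofReal (w i)) x := by
      intro x
      rw [ENNReal.ofReal_sum_of_nonneg
        (f := fun i => (R i).indicator (fun _ => w i) x)
        (fun i _ => Set.indicator_apply_nonneg (fun _ => hw i))]
      apply Finset.sum_congr rfl
      intro i _
      by_cases h : x ∈ R i <;> simp [h]
    simp only [hpt]
    rw [lintegral_finset_sum _ (fun i _ => (measurable_const.indicator (hRm i)))]
    have hterm : ∀ i, ∫⁻ x in U, (R i).indicator (fun _ => ENNReal.ofReal (w i)) x ∂volume
        = ENNReal.ofReal (w i * (1/(N:ℝ))^d) := by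
      intro i
      rw [lintegral_indicator (hRm i), Measure.restrict_restrict (hRm i),
        Set.inter_eq_self_of_subset_left (hRU i), setLIntegral_const, hvolR i,
        ← ENNReal.ofReal_mul (hw i)]
    simp only [hterm]
    rw [← ENNReal.ofReal_sum_of_nonneg]
    intro i _
    have := hw i
    positivity
  have hvsum : ∑ i, v i * (1/(N:ℝ))^d = 1 := by
    rw [hv]
    have hterm : ∀ i : Fin n, (f (hi i) + δ) / C * (1/(N:ℝ))^d
        = ((f (hi i) + δ) * (1/(N:ℝ))^d) / C := by
      intro i; ring
    simp only [hterm]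
    rw [← Finset.sum_div, ← hCdef, div_self hC0.ne']
  -- value of the piecewise density on each cube
  have hgval : ∀ i, ∀ x ∈ R i, (∑ i', (R i').indicator (fun _ => v i') x) = v i := by
    intro i x hx
    rw [Finset.sum_eq_single_of_mem i (Finset.mem_univ i)]
    · exact Set.indicator_of_mem hx _
    · intro b _ hb
      exact Set.indicator_of_notMem
        (fun hxb => Set.disjoint_left.mp (hdisj b i hb) hxb hx) _
  -- bound on C
  have hSle : ∑ i, f (hi i) * (1/(N:ℝ))^d ≤ 1 + δ := by
    have hL2 := hLint (fun i => f (hi i)) hcorner0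
    have hle : ∫⁻ x in U, ENNReal.ofReal (∑ i, (R i).indicator (fun _ => f (hi i)) x) ∂volume
        ≤ ∫⁻ x in U, (ENNReal.ofReal (f x) + ENNReal.ofReal δ) ∂volume := by
      apply setLIntegral_mono (hfm.ennreal_ofReal.add measurable_const)
      intro x hx
      obtain ⟨i, hxi⟩ := Set.mem_iUnion.mp (hunion.symm ▸ hx)
      have hsum : (∑ i', (R i').indicator (fun _ => f (hi i')) x) = f (hi i) := by
        rw [Finset.sum_eq_single_of_mem i (Finset.mem_univ i)]
        · exact Set.indicator_of_mem hxi _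
        · intro b _ hb
          exact Set.indicator_of_notMem
            (fun hxb => Set.disjoint_left.mp (hdisj b i hb) hxb hxi) _
      rw [hsum]
      calc ENNReal.ofReal (f (hi i)) ≤ ENNReal.ofReal (f x + δ) := by
            apply ENNReal.ofReal_le_ofReal
            have := hclose i x hxi
            rw [abs_sub_lt_iff] at this
            linarith [this.2]
        _ ≤ ENNReal.ofReal (f x) + ENNReal.ofReal δ := ENNReal.ofReal_add_le
    rw [hL2] at hle
    rw [lintegral_add_right _ measurable_const, h1, setLIntegral_const, hU1, mul_one] at hle
    have hone : (1:ENNReal) + ENNReal.ofReal δ = ENNReal.ofReal (1+δ) := by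
      rw [ENNReal.ofReal_add zero_le_one hδ.le, ENNReal.ofReal_one]
    rw [hone] at hle
    exact (ENNReal.ofReal_le_ofReal_iff (by positivity)).mp hle
  have hCle : C ≤ 1 + 2*δ := by
    have hδsum : ∑ _i : Fin n, δ * (1/(N:ℝ))^d = δ := by
      rw [Finset.sum_const, Finset.card_univ, Fintype.card_fin, nsmul_eq_mul, hn]
      have hpow : ((N ^ d : ℕ) : ℝ) = (N:ℝ)^d := by push_cast; ring
      have hmul : (N:ℝ)^d * (1/(N:ℝ))^d = 1 := by
        rw [← mul_pow]
        field_simp; exact one_pow _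
      rw [hpow]
      nlinarith [hmul]
    have : C = (∑ i, f (hi i) * (1/(N:ℝ))^d) + δ := by
      rw [hCdef]
      simp only [add_mul]
      rw [Finset.sum_add_distrib, hδsum]
    linarith [hSle]
  -- integrability of f on U
  have hfint : IntegrableOn f U volume := by
    refine ⟨hfm.aestronglyMeasurable, ?_⟩
    rw [hasFiniteIntegral_iff_norm]
    have hcongr : ∫⁻ x, ENNReal.ofReal ‖f x‖ ∂(volume.restrict U)
        = ∫⁻ x, ENNReal.ofReal (f x) ∂(volume.restrict U) := by
      apply lintegral_congr_ae
      filter_upwards [ae_restrict_mem hUm] with x hx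
      rw [Real.norm_of_nonneg (hf0 x hx)]
    rw [hcongr]
    rw [h1]
    exact ENNReal.one_lt_top
  have hfxint : ∫ x in U, f x = 1 := by
    rw [integral_eq_lintegral_of_nonneg_ae ?_ hfm.aestronglyMeasurable]
    · rw [h1]; rfl
    · filter_upwards [ae_restrict_mem hUm] with x hx using hf0 x hx
  -- pointwise log bound
  have hpt : ∀ x ∈ U, f x * Real.log (f x / ∑ i, (R i).indicator (fun _ => v i) x)
      ≤ f x * Real.log C := by
    intro x hx
    rcases eq_or_lt_of_le (hf0 x hx) with h0 | h0
    · rw [← h0]; simp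
    · obtain ⟨i, hxi⟩ := Set.mem_iUnion.mp (hunion.symm ▸ hx)
      rw [hgval i x hxi]
      have hfle : f x ≤ f (hi i) + δ := by
        have := hclose i x hxi
        rw [abs_sub_lt_iff] at this
        linarith [this.1]
      have hCv : C * v i = f (hi i) + δ := by
        rw [hv]
        field_simp
      have hdivle : f x / v i ≤ C := by
        rw [div_le_iff₀ (hvpos i)]
        linarith
      have hlog : Real.log (f x / v i) ≤ Real.log C :=
        Real.log_le_log (div_pos h0 (hvpos i)) hdivle
      exact mul_le_mul_of_nonneg_left hlog h0.le
  refine ⟨n, lo, hi, v, hvpos, ?_, ?_, ?_, ?_⟩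
  · exact hdisj
  · exact hunion
  · show IsProbabilityMeasure ((volume.restrict U).withDensity fun x =>
      ENNReal.ofReal (∑ i, (R i).indicator (fun _ => v i) x))
    constructor
    rw [withDensity_apply _ MeasurableSet.univ, setLIntegral_univ]
    have := hLint v (fun i => (hvpos i).le)
    rw [hvsum, ENNReal.ofReal_one] at this
    exact this
  · show (∫ x in U, f x * Real.log (f x / ∑ i, (R i).indicator (fun _ => v i) x)) < ε
    by_cases hInt : IntegrableOn
        (fun x => f x * Real.log (f x / ∑ i, (R i).indicator (fun _ => v i) x)) U volume
    · have hb1 : (∫ x in U, f x * Real.log (f x / ∑ i, (R i).indicator (fun _ => v i) x))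
          ≤ ∫ x in U, f x * Real.log C :=
        setIntegral_mono_on hInt (hfint.mul_const _) hUm hpt
      have hb2 : (∫ x in U, f x * Real.log C) = Real.log C := by
        rw [integral_mul_const, hfxint, one_mul]
      have hb3 : Real.log C ≤ C - 1 := Real.log_le_sub_one_of_pos hC0
      rw [hb2] at hb1
      have : Real.log C < ε := by
        rw [hδdef] at hCle
        linarith
      linarith
    · rw [integral_undef hInt]
      exact hε
end

section
/- Let F* be a probability measure on (0,1]^d with a bounded density f* ≤ M. Then for every ε > 0 there exists a probability measure G with strictly positive piecewise constant density on a finite rectangular partition of (0,1]^d such that KL(F* ‖ G) < ε. -/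
open MeasureTheory Set

private lemma abs_helper {a b c : ℝ} (h1 : a ≤ b) (h2 : b ≤ c) : |b| ≤ |a| + |c| := by
  rcases abs_cases b with ⟨hb, _⟩ | ⟨hb, _⟩
  · have := le_abs_self c; have := abs_nonneg a; linarith
  · have := neg_abs_le a; have := abs_nonneg c; linarith

private lemma mul_log_abs_le {x M : ℝ} (hx : 0 ≤ x) (hxM : x ≤ M) (hM : 1 ≤ M) :
    |x * Real.log x| ≤ M * Real.log M + 1 := by
  have hMlog : 0 ≤ Real.log M := Real.log_nonneg hM
  rcases eq_or_lt_of_le hx with h0 | h0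
  · rw [← h0]; simp; positivity
  · rcases le_or_gt 1 x with h1 | h1
    · have hlx : 0 ≤ Real.log x := Real.log_nonneg h1
      rw [abs_of_nonneg (by positivity)]
      have hle : Real.log x ≤ Real.log M := Real.log_le_log h0 hxM
      nlinarith
    · have hlx : Real.log x < 0 := Real.log_neg h0 h1
      rw [abs_of_nonpos (by nlinarith)]
      have h2 : Real.log x⁻¹ ≤ x⁻¹ - 1 := Real.log_le_sub_one_of_pos (by positivity)
      rw [Real.log_inv] at h2
      have h3 : -(x * Real.log x) ≤ 1 - x := by
        calc -(x * Real.log x) = x * (-Real.log x) := by ring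
        _ ≤ x * (x⁻¹ - 1) := by nlinarith
        _ = 1 - x := by field_simp
      nlinarith

private lemma log_sub_log_le {p q δ : ℝ} (hδ : 0 < δ) (hp : δ ≤ p) (hq : δ ≤ q) :
    Real.log p - Real.log q ≤ |p - q| / δ := by
  have hp0 : 0 < p := lt_of_lt_of_le hδ hp
  have hq0 : 0 < q := lt_of_lt_of_le hδ hq
  have h := Real.log_le_sub_one_of_pos (show 0 < p / q by positivity)
  rw [Real.log_div hp0.ne' hq0.ne'] at h
  have h2 : p / q - 1 ≤ |p - q| / δ := by
    rw [div_sub_one hq0.ne', div_le_div_iff₀ hq0 hδ]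
    have h4 := le_abs_self (p - q)
    have h5 := abs_nonneg (p - q)
    nlinarith
  linarith

private def pcell (N d : ℕ) (k : Fin d → Fin N) : Set (Fin d → ℝ) :=
  Set.univ.pi fun j => Ioc ((k j : ℝ) / N) (((k j : ℝ) + 1) / N)

private lemma pcell_subset {N d : ℕ} (hN : 0 < N) (k : Fin d → Fin N) :
    pcell N d k ⊆ Set.univ.pi fun _ => Ioc (0:ℝ) 1 := by
  intro x hx
  have hN' : (0:ℝ) < N := by exact_mod_cast hN
  intro j _
  have hj := hx j (mem_univ j)
  simp only [mem_Ioc] at hj ⊢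
  constructor
  · have : (0:ℝ) ≤ (k j : ℝ) / N := by positivity
    linarith [hj.1]
  · have hk : (k j : ℝ) + 1 ≤ N := by exact_mod_cast Nat.succ_le_of_lt (k j).isLt
    have : ((k j : ℝ) + 1) / N ≤ 1 := by rw [div_le_one hN']; exact hk
    linarith [hj.2]

private lemma pcell_disjoint {N d : ℕ} (hN : 0 < N) {k k' : Fin d → Fin N} (h : k ≠ k') :
    Disjoint (pcell N d k) (pcell N d k') := by
  have hN' : (0:ℝ) < N := by exact_mod_cast hN
  rw [Set.disjoint_left]
  intro x hx hx'
  obtain ⟨j, hj⟩ := Function.ne_iff.1 h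
  have h1 := hx j (mem_univ j)
  have h2 := hx' j (mem_univ j)
  simp only [mem_Ioc] at h1 h2
  have key : ∀ a b : ℕ, a < b → x j ≤ ((a:ℝ) + 1) / N → (b:ℝ) / N < x j → False := by
    intro a b hab hle hlt
    have hab' : (a:ℝ) + 1 ≤ b := by exact_mod_cast Nat.succ_le_of_lt hab
    have : ((a:ℝ) + 1) / N ≤ (b:ℝ) / N := by gcongr
    linarith
  rcases lt_or_gt_of_ne (fun hc : (k j : ℕ) = (k' j : ℕ) => hj (Fin.ext hc)) with hlt | hlt
  · exact key _ _ hlt h1.2 h2.1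
  · exact key _ _ hlt h2.2 h1.1

private lemma pcell_volume {N d : ℕ} (hN : 0 < N) (k : Fin d → Fin N) :
    volume (pcell N d k) = ENNReal.ofReal ((1 / (N:ℝ)) ^ d) := by
  have hN' : (0:ℝ) < N := by exact_mod_cast hN
  rw [pcell, volume_pi_pi]
  have : ∀ j, volume (Ioc ((k j : ℝ) / N) (((k j : ℝ) + 1) / N)) = ENNReal.ofReal (1 / N) := by
    intro j
    rw [Real.volume_Ioc]
    congr 1
    field_simp
    ring
  simp only [this, Finset.prod_const, Finset.card_univ, Fintype.card_fin]
  rw [← ENNReal.ofReal_pow (by positivity)]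

private lemma pcell_dist {N d : ℕ} (hN : 0 < N) (k : Fin d → Fin N) {x : Fin d → ℝ}
    (hx : x ∈ pcell N d k) : dist x (fun j => ((k j : ℝ) + 1) / N) ≤ 1 / N := by
  have hN' : (0:ℝ) < N := by exact_mod_cast hN
  refine (dist_pi_le_iff (by positivity)).2 fun j => ?_
  have hj := hx j (mem_univ j)
  simp only [mem_Ioc] at hj
  rw [Real.dist_eq, abs_le]
  have : ((k j : ℝ) + 1) / N - (k j : ℝ) / N = 1 / N := by field_simp; ring
  constructor <;> [linarith [hj.2]; linarith [hj.1, this ▸ sub_le_sub_right hj.2 ((k j : ℝ)/N)]]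

private lemma pcell_exists {N d : ℕ} (hN : 0 < N) {x : Fin d → ℝ}
    (hx : x ∈ Set.univ.pi fun _ => Ioc (0:ℝ) 1) : ∃ k : Fin d → Fin N, x ∈ pcell N d k := by
  have hN' : (0:ℝ) < N := by exact_mod_cast hN
  have hmem : ∀ j, 0 < x j ∧ x j ≤ 1 := fun j => by
    have := hx j (mem_univ j); simpa using this
  have hk : ∀ j, ⌈x j * N⌉₊ - 1 < N := by
    intro j
    have h1 : x j * N ≤ N := by nlinarith [(hmem j).2]
    have h2 : ⌈x j * N⌉₊ ≤ N := Nat.ceil_le.2 (by exact_mod_cast h1)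
    have h3 : 1 ≤ ⌈x j * N⌉₊ := Nat.one_le_ceil_iff.2 (by nlinarith [(hmem j).1])
    omega
  refine ⟨fun j => ⟨⌈x j * N⌉₊ - 1, hk j⟩, fun j _ => ?_⟩
  have h3 : 1 ≤ ⌈x j * N⌉₊ := Nat.one_le_ceil_iff.2 (by nlinarith [(hmem j).1, (hmem j).2])
  have hcast : ((⌈x j * N⌉₊ - 1 : ℕ) : ℝ) = (⌈x j * N⌉₊ : ℝ) - 1 := by
    have := Nat.cast_sub h3 (R := ℝ); simpa using this
  simp only [mem_Ioc]
  constructor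
  · rw [div_lt_iff₀ hN', hcast]
    have := Nat.ceil_lt_add_one (mul_pos (hmem j).1 hN').le
    linarith
  · rw [le_div_iff₀ hN', hcast]
    have := Nat.le_ceil (x j * N)
    linarith
set_option maxHeartbeats 1000000 in
theorem stmt19
    (d : ℕ) (U : Set (Fin d → ℝ)) (hU : U = Set.univ.pi fun _ => Ioc (0:ℝ) 1)
    (f : (Fin d → ℝ) → ℝ) (M : ℝ) (Fstar : Measure (Fin d → ℝ))
    [IsProbabilityMeasure Fstar]
    (hfm : Measurable f) (hf0 : ∀ x ∈ U, 0 ≤ f x) (hfM : ∀ x ∈ U, f x ≤ M)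
    (hF : Fstar = (volume.restrict U).withDensity fun x => ENNReal.ofReal (f x)) :
    ∀ ε > 0, ∃ (n : ℕ) (lo hi : Fin n → Fin d → ℝ) (v : Fin n → ℝ),
      (∀ i, 0 < v i) ∧
      (∀ i i', i ≠ i' →
        Disjoint (Set.univ.pi fun j => Ioc (lo i j) (hi i j))
          (Set.univ.pi fun j => Ioc (lo i' j) (hi i' j))) ∧
      (⋃ i, Set.univ.pi fun j => Ioc (lo i j) (hi i j)) = U ∧
      IsProbabilityMeasure
        ((volume.restrict U).withDensity fun x => ENNReal.ofReal
          (∑ i, Set.indicator (Set.univ.pi fun j => Ioc (lo i j) (hi i j))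
            (fun _ => v i) x)) ∧
      (∫ x in U, f x * Real.log (f x /
          ∑ i, Set.indicator (Set.univ.pi fun j => Ioc (lo i j) (hi i j))
            (fun _ => v i) x)) < ε := by
  intro ε hε
  -- basic measure facts about U
  have hUmeas : MeasurableSet U := by
    rw [hU]; exact MeasurableSet.univ_pi fun _ => measurableSet_Ioc
  have hUvol : volume U = 1 := by
    rw [hU, volume_pi_pi]; simp [Real.volume_Ioc]
  have hfinU : IsFiniteMeasure (volume.restrict U) :=
    ⟨by rw [Measure.restrict_apply_univ, hUvol]; exact ENNReal.one_lt_top⟩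
  -- constants
  set M' : ℝ := max M 1 with hM'def
  have hM'1 : (1:ℝ) ≤ M' := le_max_right _ _
  have hM'0 : (0:ℝ) < M' := lt_of_lt_of_le one_pos hM'1
  have hfM' : ∀ x ∈ U, f x ≤ M' := fun x hx => le_trans (hfM x hx) (le_max_left _ _)
  set δ : ℝ := min 1 (ε / (4 * M')) with hδdef
  have hδ0 : 0 < δ := lt_min one_pos (div_pos hε (by positivity))
  have hδ1 : δ ≤ 1 := min_le_left _ _
  have hδε : M' * δ ≤ ε / 4 := by
    have h1 : δ ≤ ε / (4 * M') := min_le_right _ _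
    have := mul_le_mul_of_nonneg_left h1 hM'0.le
    calc M' * δ ≤ M' * (ε / (4 * M')) := this
    _ = ε / 4 := by field_simp
  set η : ℝ := ε * δ / (8 * M') with hηdef
  have hη0 : 0 < η := div_pos (mul_pos hε hδ0) (by positivity)
  have hδne : δ ≠ 0 := hδ0.ne'
  have hM'ne : M' ≠ 0 := hM'0.ne'
  -- integrability of f on U, and its integral is 1
  have hint_f : Integrable f (volume.restrict U) := by
    refine Integrable.mono' (integrable_const M') hfm.aestronglyMeasurable ?_
    refine (ae_restrict_iff' hUmeas).2 (ae_of_all _ fun x hx => ?_)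
    rw [Real.norm_eq_abs, abs_le]
    exact ⟨by linarith [hf0 x hx], hfM' x hx⟩
  have hF1 : (∫⁻ x, ENNReal.ofReal (f x) ∂(volume.restrict U)) = 1 := by
    have hh := measure_univ (μ := Fstar)
    rw [hF, withDensity_apply _ MeasurableSet.univ, Measure.restrict_univ] at hh
    exact hh
  have hfint1 : (∫ x in U, f x) = 1 := by
    rw [integral_eq_lintegral_of_nonneg_ae
      ((ae_restrict_iff' hUmeas).2 (ae_of_all _ hf0)) hfm.aestronglyMeasurable, hF1]
    simp
  -- continuous compactly supported approximation of the indicator extension of f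
  set f' : (Fin d → ℝ) → ℝ := U.indicator f with hf'def
  have hf'int : Integrable f' volume := by
    rw [hf'def, integrable_indicator_iff hUmeas]; exact hint_f
  obtain ⟨c, hc_supp, hc_close, hc_cont, hc_int⟩ :=
    hf'int.exists_hasCompactSupport_integral_sub_le (half_pos hη0)
  have hc_uc : UniformContinuous c := hc_supp.uniformContinuous_of_continuous hc_cont
  obtain ⟨θ, hθ0, hθ⟩ := Metric.uniformContinuous_iff.1 hc_uc (η/2) (half_pos hη0)
  -- choose the grid resolution
  obtain ⟨N, hN0, hNθ⟩ : ∃ N : ℕ, 0 < N ∧ (1:ℝ)/N < θ := by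
    refine ⟨⌊1/θ⌋₊ + 1, Nat.succ_pos _, ?_⟩
    have h1 : (1/θ : ℝ) < ⌊1/θ⌋₊ + 1 := Nat.lt_floor_add_one _
    rw [div_lt_iff₀ (by exact_mod_cast Nat.succ_pos ⌊1/θ⌋₊)]
    rw [div_lt_iff₀ hθ0] at h1
    push_cast
    nlinarith
  have hN' : (0:ℝ) < N := by exact_mod_cast hN0
  -- the cells
  set k : Fin (N^d) → Fin d → Fin N := fun i => finFunctionFinEquiv.symm i with hkdef
  set lo : Fin (N^d) → Fin d → ℝ := fun i j => (k i j : ℝ) / N with hlodef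
  set hb : Fin (N^d) → Fin d → ℝ := fun i j => ((k i j : ℝ) + 1) / N with hbdef
  have hc_eq : ∀ i, (Set.univ.pi fun j => Ioc (lo i j) (hb i j)) = pcell N d (k i) :=
    fun i => rfl
  have hcellmeas : ∀ i, MeasurableSet (pcell N d (k i)) :=
    fun i => MeasurableSet.univ_pi fun _ => measurableSet_Ioc
  have hkinj : Function.Injective k := fun i i' hii' => by
    have := congrArg finFunctionFinEquiv hii'
    simpa [hkdef] using this
  have hdisj : ∀ i i', i ≠ i' → Disjoint (pcell N d (k i)) (pcell N d (k i')) :=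
    fun i i' hne => pcell_disjoint hN0 (fun hk => hne (hkinj hk))
  have hsubU : ∀ i, pcell N d (k i) ⊆ U := fun i => by
    rw [hU]; exact pcell_subset hN0 (k i)
  have hmem_ex : ∀ x ∈ U, ∃ i, x ∈ pcell N d (k i) := by
    intro x hx
    rw [hU] at hx
    obtain ⟨k₀, hk₀⟩ := pcell_exists hN0 hx
    refine ⟨finFunctionFinEquiv k₀, ?_⟩
    have : k (finFunctionFinEquiv k₀) = k₀ := by
      simp [hkdef]
    rwa [this]
  have hunion : (⋃ i, Set.univ.pi fun j => Ioc (lo i j) (hb i j)) = U := by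
    apply Set.Subset.antisymm
    · exact Set.iUnion_subset fun i => (hc_eq i) ▸ hsubU i
    · intro x hx
      obtain ⟨i, hi⟩ := hmem_ex x hx
      exact Set.mem_iUnion.2 ⟨i, (hc_eq i) ▸ hi⟩
  -- the values
  set a : Fin (N^d) → ℝ := fun i => max (c (fun j => ((k i j : ℝ) + 1) / N)) 0 with hadef
  have ha0 : ∀ i, 0 ≤ a i := fun i => le_max_right _ _
  set t : ℝ := (1 / (N:ℝ))^d with htdef
  have ht0 : 0 < t := pow_pos (div_pos one_pos hN') d
  have htN : (N:ℝ)^d * t = 1 := by rw [htdef, ← mul_pow]; field_simp; simp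
  set A : ℝ := ∑ i, a i with hAdef
  have hA0 : 0 ≤ A := Finset.sum_nonneg fun i _ => ha0 i
  set C : ℝ := A * t + δ with hCdef
  have hC0 : 0 < C := add_pos_of_nonneg_of_pos (mul_nonneg hA0 ht0.le) hδ0
  set v : Fin (N^d) → ℝ := fun i => (a i + δ) / C with hvdef
  have hv0 : ∀ i, 0 < v i := fun i => div_pos (by linarith [ha0 i]) hC0
  -- step functions
  set h : (Fin d → ℝ) → ℝ := fun x => ∑ i, (pcell N d (k i)).indicator (fun _ => a i) x
    with hhdef
  set g : (Fin d → ℝ) → ℝ := fun x => ∑ i, (pcell N d (k i)).indicator (fun _ => v i) x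
    with hgdef
  have hhm : Measurable h :=
    Finset.measurable_sum _ fun i _ => measurable_const.indicator (hcellmeas i)
  have hgm : Measurable g :=
    Finset.measurable_sum _ fun i _ => measurable_const.indicator (hcellmeas i)
  have hv_eq : ∀ i, v i = (a i + δ) / C := fun _ => rfl
  have ha_eq : ∀ i, a i = max (c (fun j => ((k i j : ℝ) + 1) / N)) 0 := fun _ => rfl
  have hh_ap : ∀ x, h x = ∑ i, (pcell N d (k i)).indicator (fun _ => a i) x := fun _ => rfl
  have hg_ap : ∀ x, g x = ∑ i, (pcell N d (k i)).indicator (fun _ => v i) x := fun _ => rfl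
  clear_value M' δ η lo hb a t A C v h g f'
  have hvol_t : ∀ i, volume (pcell N d (k i)) = ENNReal.ofReal t := fun i => by
    rw [htdef]; exact pcell_volume hN0 _
  -- evaluation on a cell
  have heval : ∀ x ∈ U, ∃ i, x ∈ pcell N d (k i) ∧ h x = a i ∧ g x = v i := by
    intro x hx
    obtain ⟨i, hxi⟩ := hmem_ex x hx
    have hz : ∀ (q : Fin (N^d) → ℝ) (b : Fin (N^d)), b ≠ i →
        (pcell N d (k b)).indicator (fun _ => q b) x = 0 := fun q b hb' =>
      indicator_of_notMem (fun hxb => (Set.disjoint_left.1 (hdisj b i hb') hxb hxi)) _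
    have key : ∀ q : Fin (N^d) → ℝ,
        (∑ i', (pcell N d (k i')).indicator (fun _ => q i') x) = q i := by
      intro q
      rw [Finset.sum_eq_single i (fun b _ hb' => hz q b hb')
        (fun hni => absurd (Finset.mem_univ i) hni)]
      exact indicator_of_mem hxi _
    exact ⟨i, hxi, (hh_ap x).trans (key a), (hg_ap x).trans (key v)⟩
  have hh0 : ∀ x, 0 ≤ h x := fun x => by
    rw [hh_ap x]
    exact Finset.sum_nonneg fun i _ => indicator_nonneg (fun _ _ => ha0 i) x
  have hhA : ∀ x, h x ≤ A := by
    intro x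
    rw [hh_ap x, hAdef]
    refine Finset.sum_le_sum fun i _ => ?_
    by_cases hxi : x ∈ pcell N d (k i) <;> simp [indicator, hxi, ha0 i]
  -- G is a probability measure
  have hsum_v : ∑ i, v i * t = 1 := by
    have e1 : ∀ i : Fin (N^d), v i * t = (a i + δ) * t / C := fun i => by
      rw [hv_eq i]; ring
    rw [Finset.sum_congr rfl fun i _ => e1 i, ← Finset.sum_div, ← Finset.sum_mul,
      Finset.sum_add_distrib, Finset.sum_const, Finset.card_univ, Fintype.card_fin,
      nsmul_eq_mul, ← hAdef]
    have e2 : (A + (N^d : ℕ) * δ) * t = C := by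
      push_cast
      rw [hCdef]
      linear_combination δ * htN
    rw [e2]
    exact div_self hC0.ne'
  have hprob : IsProbabilityMeasure
      ((volume.restrict U).withDensity fun x => ENNReal.ofReal (g x)) := by
    constructor
    rw [withDensity_apply _ MeasurableSet.univ, Measure.restrict_univ]
    have h1 : ∀ x, ENNReal.ofReal (g x)
        = ∑ i, (pcell N d (k i)).indicator (fun _ => ENNReal.ofReal (v i)) x := by
      intro x
      rw [hg_ap x]
      rw [ENNReal.ofReal_sum_of_nonneg (fun i _ => indicator_nonneg (fun _ _ => (hv0 i).le) x)]
      refine Finset.sum_congr rfl fun i _ => ?_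
      by_cases hxi : x ∈ pcell N d (k i) <;> simp [indicator, hxi]
    simp_rw [h1]
    rw [lintegral_finset_sum _ fun i _ => measurable_const.indicator (hcellmeas i)]
    have h2 : ∀ i, (∫⁻ x, (pcell N d (k i)).indicator (fun _ => ENNReal.ofReal (v i)) x
        ∂(volume.restrict U)) = ENNReal.ofReal (v i * t) := by
      intro i
      rw [lintegral_indicator_const (hcellmeas i), Measure.restrict_apply (hcellmeas i),
        Set.inter_eq_self_of_subset_left (hsubU i), hvol_t i,
        ← ENNReal.ofReal_mul (hv0 i).le]
    simp_rw [h2]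
    rw [← ENNReal.ofReal_sum_of_nonneg (fun i _ => mul_nonneg (hv0 i).le ht0.le), hsum_v,
      ENNReal.ofReal_one]
  -- L¹ estimate : ∫_U |f - h| ≤ η
  have hint_h : Integrable h (volume.restrict U) := by
    refine Integrable.mono' (integrable_const A) hhm.aestronglyMeasurable ?_
    refine (ae_restrict_iff' hUmeas).2 (ae_of_all _ fun x _ => ?_)
    rw [Real.norm_eq_abs, abs_of_nonneg (hh0 x)]
    exact hhA x
  have hint_fh : Integrable (fun x => |f x - h x|) (volume.restrict U) :=
    (hint_f.sub hint_h).abs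
  have hint_fc : Integrable (fun x => |f x - c x|) (volume.restrict U) :=
    (hint_f.sub hc_int.restrict).abs
  have hpt1 : ∀ x ∈ U, |f x - h x| ≤ |f x - c x| + η/2 := by
    intro x hx
    obtain ⟨i, hxi, hhx, _⟩ := heval x hx
    have hdist : dist x (fun j => ((k i j : ℝ) + 1) / N) ≤ 1/N := pcell_dist hN0 _ hxi
    have hosc : |c x - c (fun j => ((k i j : ℝ) + 1) / N)| ≤ η/2 := by
      have := hθ (lt_of_le_of_lt hdist hNθ)
      rw [Real.dist_eq] at this
      linarith
    have hfc : |f x - max (c x) 0| ≤ |f x - c x| := by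
      rcases le_or_gt 0 (c x) with hcx | hcx
      · rw [max_eq_left hcx]
      · rw [max_eq_right hcx.le, sub_zero, abs_of_nonneg (hf0 x hx)]
        calc f x ≤ f x - c x := by linarith
        _ ≤ |f x - c x| := le_abs_self _
    have hmm : |max (c x) 0 - a i| ≤ |c x - c (fun j => ((k i j : ℝ) + 1) / N)| := by
      rw [ha_eq i]
      exact abs_max_sub_max_le_abs _ _ _
    calc |f x - h x| = |(f x - max (c x) 0) + (max (c x) 0 - a i)| := by
          rw [hhx]; ring_nf
    _ ≤ |f x - max (c x) 0| + |max (c x) 0 - a i| := abs_add_le _ _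
    _ ≤ |f x - c x| + η/2 := by linarith
  have hL1 : (∫ x in U, |f x - h x|) ≤ η := by
    have step : (∫ x in U, |f x - h x|) ≤ ∫ x in U, (|f x - c x| + η/2) :=
      integral_mono_ae hint_fh (hint_fc.add (integrable_const _))
        ((ae_restrict_iff' hUmeas).2 (ae_of_all _ hpt1))
    have step2 : (∫ x in U, (|f x - c x| + η/2))
        = (∫ x in U, |f x - c x|) + η/2 := by
      rw [integral_add hint_fc (integrable_const _), setIntegral_const, measureReal_def, hUvol]
      simp
    have step3 : (∫ x in U, |f x - c x|) ≤ η/2 := by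
      have e1 : (∫ x in U, |f x - c x|) = ∫ x in U, |f' x - c x| := by
        refine setIntegral_congr_fun hUmeas fun x hx => ?_
        rw [hf'def, indicator_of_mem hx]
      have e2 : (∫ x in U, |f' x - c x|) ≤ ∫ x, |f' x - c x| := by
        refine setIntegral_le_integral ((hf'int.sub hc_int).abs) ?_
        exact ae_of_all _ fun x => abs_nonneg _
      have e3 : (∫ x, |f' x - c x|) ≤ η/2 := by
        have : (∫ x, |f' x - c x|) = ∫ x, ‖f' x - c x‖ := by
          simp [Real.norm_eq_abs]
        rw [this]; exact hc_close
      linarith [e1 ▸ e2, e3]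
    linarith [step, step2 ▸ step, step3]
  -- ∫_U h = A * t and A * t ≤ 1 + η
  have hint_h_val : (∫ x in U, h x) = A * t := by
    simp only [hh_ap]
    rw [integral_finset_sum _ fun i _ => (integrable_const (a i)).indicator (hcellmeas i)]
    have e1 : ∀ i, (∫ x in U, (pcell N d (k i)).indicator (fun _ => a i) x) = a i * t := by
      intro i
      rw [integral_indicator_const (a i) (hcellmeas i), measureReal_def, Measure.restrict_apply (hcellmeas i),
        Set.inter_eq_self_of_subset_left (hsubU i), hvol_t i,
        ENNReal.toReal_ofReal ht0.le]
      rw [smul_eq_mul]; ring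
    rw [Finset.sum_congr rfl fun i _ => e1 i, ← Finset.sum_mul, ← hAdef]
  have hAt : A * t ≤ 1 + η := by
    have hpt : ∀ x ∈ U, h x ≤ f x + |f x - h x| := by
      intro x hx
      have := le_abs_self (h x - f x)
      rw [abs_sub_comm] at this
      linarith
    have step : (∫ x in U, h x) ≤ ∫ x in U, (f x + |f x - h x|) :=
      integral_mono_ae hint_h (hint_f.add hint_fh)
        ((ae_restrict_iff' hUmeas).2 (ae_of_all _ hpt))
    rw [integral_add hint_f hint_fh, hfint1, hint_h_val] at step
    linarith
  have hlogC : max (Real.log C) 0 ≤ η + δ := by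
    rcases le_or_gt (Real.log C) 0 with hc | hc
    · rw [max_eq_right hc]; linarith
    · rw [max_eq_left hc.le]
      have := Real.log_le_sub_one_of_pos hC0
      rw [hCdef] at this ⊢
      linarith
  -- the key pointwise bound
  have hmain : ∀ x ∈ U, f x * Real.log (f x / g x)
      ≤ (M'/δ) * |f x - h x| + M' * max (Real.log C) 0 := by
    intro x hx
    obtain ⟨i, hxi, hhx, hgx⟩ := heval x hx
    have hg_eq : g x = (h x + δ) / C := by rw [hgx, hhx, hv_eq i]
    have hgpos : 0 < g x := by
      rw [hg_eq]
      exact div_pos (by linarith [hh0 x]) hC0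
    have hRHS0 : 0 ≤ (M'/δ) * |f x - h x| + M' * max (Real.log C) 0 :=
      add_nonneg (mul_nonneg (div_nonneg hM'0.le hδ0.le) (abs_nonneg _))
        (mul_nonneg hM'0.le (le_max_right _ _))
    rcases eq_or_lt_of_le (hf0 x hx) with h0 | h0
    · have e0 : f x * Real.log (f x / g x) = 0 := by rw [← h0]; exact zero_mul _
      rw [e0]; exact hRHS0
    · have hlog : Real.log (f x / g x) = Real.log (f x) - Real.log (g x) :=
        Real.log_div h0.ne' hgpos.ne'
      have hgl : Real.log (g x) = Real.log (h x + δ) - Real.log C := by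
        rw [hg_eq, Real.log_div (show (0:ℝ) < h x + δ by linarith [hh0 x]).ne' hC0.ne']
      have key1 : Real.log (f x) ≤ Real.log (f x + δ) := Real.log_le_log h0 (by linarith)
      have key2 : Real.log (f x + δ) - Real.log (h x + δ) ≤ |f x - h x| / δ := by
        have hb1 : δ ≤ f x + δ := by linarith
        have hb2 : δ ≤ h x + δ := by linarith [hh0 x]
        have := log_sub_log_le hδ0 hb1 hb2
        have he : |f x + δ - (h x + δ)| = |f x - h x| := by ring_nf
        rw [he] at this
        exact this
      have e1 : f x * Real.log (f x / g x)
          = f x * (Real.log (f x) - Real.log (h x + δ)) + f x * Real.log C := by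
        rw [hlog, hgl]; ring
      have b1 : f x * (Real.log (f x) - Real.log (h x + δ)) ≤ (M'/δ) * |f x - h x| := by
        have hd : Real.log (f x) - Real.log (h x + δ) ≤ |f x - h x| / δ := by linarith
        rcases le_or_gt (Real.log (f x) - Real.log (h x + δ)) 0 with hneg | hpos
        · exact le_trans (mul_nonpos_of_nonneg_of_nonpos (hf0 x hx) hneg)
            (mul_nonneg (div_nonneg hM'0.le hδ0.le) (abs_nonneg _))
        · calc f x * (Real.log (f x) - Real.log (h x + δ))
              ≤ M' * (|f x - h x| / δ) := mul_le_mul (hfM' x hx) hd hpos.le hM'0.le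
          _ = (M'/δ) * |f x - h x| := by ring
      have b2 : f x * Real.log C ≤ M' * max (Real.log C) 0 := by
        rcases le_or_gt (Real.log C) 0 with hc | hc
        · have h1 : f x * Real.log C ≤ 0 := mul_nonpos_of_nonneg_of_nonpos (hf0 x hx) hc
          have h2 : 0 ≤ M' * max (Real.log C) 0 := mul_nonneg hM'0.le (le_max_right _ _)
          linarith
        · rw [max_eq_left hc.le]
          exact mul_le_mul_of_nonneg_right (hfM' x hx) hc.le
      rw [e1]
      linarith
  -- integrability of the KL integrand
  have hFeq : ∀ x ∈ U, f x * Real.log (f x / g x)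
      = f x * Real.log (f x) - f x * Real.log (h x + δ) + f x * Real.log C := by
    intro x hx
    obtain ⟨i, hxi, hhx, hgx⟩ := heval x hx
    have hg_eq : g x = (h x + δ) / C := by rw [hgx, hhx, hv_eq i]
    have hgpos : 0 < g x := by
      rw [hg_eq]
      exact div_pos (by linarith [hh0 x]) hC0
    rcases eq_or_lt_of_le (hf0 x hx) with h0 | h0
    · rw [← h0]; ring
    · rw [Real.log_div h0.ne' hgpos.ne', hg_eq,
        Real.log_div (show (0:ℝ) < h x + δ by linarith [hh0 x]).ne' hC0.ne']
      ring
  have hFint : Integrable (fun x => f x * Real.log (f x / g x)) (volume.restrict U) := by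
    set K : ℝ := (M' * Real.log M' + 1) + M' * (|Real.log δ| + |Real.log (A + δ)|)
      + M' * |Real.log C| with hKdef
    clear_value K
    have hmeas : Measurable (fun x => f x * Real.log (f x / g x)) :=
      hfm.mul (Real.measurable_log.comp (hfm.div hgm))
    refine Integrable.mono' (integrable_const K) hmeas.aestronglyMeasurable ?_
    refine (ae_restrict_iff' hUmeas).2 (ae_of_all _ fun x hx => ?_)
    rw [Real.norm_eq_abs, hFeq x hx]
    have t1 : |f x * Real.log (f x)| ≤ M' * Real.log M' + 1 :=
      mul_log_abs_le (hf0 x hx) (hfM' x hx) hM'1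
    have t2 : |f x * Real.log (h x + δ)| ≤ M' * (|Real.log δ| + |Real.log (A + δ)|) := by
      rw [abs_mul]
      have hl : |Real.log (h x + δ)| ≤ |Real.log δ| + |Real.log (A + δ)| := by
        refine abs_helper (Real.log_le_log hδ0 (by linarith [hh0 x]))
          (Real.log_le_log (by linarith [hh0 x]) (by linarith [hhA x]))
      have hfx : |f x| ≤ M' := by
        rw [abs_of_nonneg (hf0 x hx)]; exact hfM' x hx
      exact mul_le_mul hfx hl (abs_nonneg _) hM'0.le
    have t3 : |f x * Real.log C| ≤ M' * |Real.log C| := by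
      rw [abs_mul]
      refine mul_le_mul_of_nonneg_right ?_ (abs_nonneg _)
      rw [abs_of_nonneg (hf0 x hx)]; exact hfM' x hx
    calc |f x * Real.log (f x) - f x * Real.log (h x + δ) + f x * Real.log C|
        ≤ |f x * Real.log (f x) - f x * Real.log (h x + δ)| + |f x * Real.log C| :=
          abs_add_le _ _
    _ ≤ |f x * Real.log (f x)| + |f x * Real.log (h x + δ)| + |f x * Real.log C| := by
          linarith [abs_sub (f x * Real.log (f x)) (f x * Real.log (h x + δ))]
    _ ≤ K := by rw [hKdef]; linarith
  -- the final estimate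
  have hfinal : (∫ x in U, f x * Real.log (f x / g x)) < ε := by
    have hRHSint : Integrable (fun x => (M'/δ) * |f x - h x| + M' * max (Real.log C) 0)
        (volume.restrict U) := (hint_fh.const_mul _).add (integrable_const _)
    have step : (∫ x in U, f x * Real.log (f x / g x))
        ≤ ∫ x in U, ((M'/δ) * |f x - h x| + M' * max (Real.log C) 0) :=
      integral_mono_ae hFint hRHSint ((ae_restrict_iff' hUmeas).2 (ae_of_all _ hmain))
    have e1 : (∫ x in U, ((M'/δ) * |f x - h x| + M' * max (Real.log C) 0))
        = (M'/δ) * (∫ x in U, |f x - h x|) + M' * max (Real.log C) 0 := by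
      rw [integral_add (hint_fh.const_mul _) (integrable_const _), integral_const_mul,
        setIntegral_const, measureReal_def, hUvol]
      simp
    have e2 : (M'/δ) * (∫ x in U, |f x - h x|) ≤ (M'/δ) * η :=
      mul_le_mul_of_nonneg_left hL1 (div_nonneg hM'0.le hδ0.le)
    have e3 : M' * max (Real.log C) 0 ≤ M' * (η + δ) :=
      mul_le_mul_of_nonneg_left hlogC hM'0.le
    have e4 : (M'/δ) * η = ε / 8 := by
      rw [hηdef]; field_simp
    have e5 : M' * η = ε * δ / 8 := by
      rw [hηdef]; field_simp
    have e6 : ε * δ ≤ ε := by nlinarith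
    calc (∫ x in U, f x * Real.log (f x / g x))
        ≤ (M'/δ) * (∫ x in U, |f x - h x|) + M' * max (Real.log C) 0 := e1 ▸ step
    _ ≤ (M'/δ) * η + M' * (η + δ) := by linarith
    _ ≤ ε/8 + (ε * δ / 8 + ε / 4) := by rw [e4]; nlinarith
    _ < ε := by nlinarith
  refine ⟨N^d, lo, hb, v, hv0, ?_, hunion, ?_, ?_⟩
  · intro i i' hne
    rw [hc_eq i, hc_eq i']
    exact hdisj i i' hne
  · simp only [hc_eq, ← hg_ap]
    exact hprob
  · simp only [hc_eq, ← hg_ap]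
    exact hfinal
end
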